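/- arXiv:1907.11151 — 7 statements merged into one kernel-verified Lean document; each statement's English description precedes it below -/
import Mathlib

section
/- For all integers p, q ≥ 1 and all Z, W ∈ M_{p×q}(ℂ) such that I_p − Z Zᴴ and I_p − W Wᴴ are positive definite, one has det(I_p − Z Zᴴ) · det(I_p − W Wᴴ) ≤ |det(I_p − Z Wᴴ)|², with equality if and only if Z = W. (Equivalently, the invariant function ψ(Z,W) = |det(I_p − Z Wᴴ)|² / (det(I_p − Z Zᴴ) det(I_p − W Wᴴ)) satisfies ψ ≥ 1, and ψ(Z,W) > 1 whenever Z ≠ W.) -/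
open Matrix
open scoped ComplexConjugate ComplexOrder

noncomputable section

/-- The type I bounded symmetric domain condition is `(1 - Z * Zᴴ).PosDef`. -/
def typeIDomain (p q : ℕ) : Set (Matrix (Fin p) (Fin q) ℂ) :=
  {Z | (1 - Z * Zᴴ).PosDef}

section Aux

open scoped MatrixOrder

variable {m n : Type*} [Fintype m] [Fintype n] [DecidableEq m] [DecidableEq n]

private lemma posDef_one_sub_conjTranspose_mul (W : Matrix m n ℂ)
    (hW : (1 - W * Wᴴ).PosDef) : (1 - Wᴴ * W).PosDef := by
  set B := (1 - W * Wᴴ)⁻¹ with hBdef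
  have hdet : IsUnit (1 - W * Wᴴ).det := hW.det_pos.ne'.isUnit
  have hB : (1 - W * Wᴴ) * B = 1 := mul_nonsing_inv _ hdet
  have hXpos : (1 + Wᴴ * B * W).PosDef :=
    Matrix.PosDef.one.add_posSemidef (hW.inv.posSemidef.conjTranspose_mul_mul_same W)
  have hmul : (1 - Wᴴ * W) * (1 + Wᴴ * B * W) = 1 := by
    have expand : (1 - Wᴴ * W) * (1 + Wᴴ * B * W)
        = 1 + Wᴴ * ((1 - W * Wᴴ) * B) * W - Wᴴ * W := by
      simp only [Matrix.mul_add, Matrix.add_mul, Matrix.sub_mul, Matrix.mul_sub,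
        Matrix.mul_one, Matrix.one_mul, Matrix.mul_assoc]
      abel
    rw [expand, hB, Matrix.mul_one]
    abel
  have hinv : (1 - Wᴴ * W)⁻¹ = 1 + Wᴴ * B * W := inv_eq_right_inv hmul
  rw [← Matrix.posDef_inv_iff, hinv]
  exact hXpos

private lemma det_add_posSemidef {A P : Matrix n n ℂ} (hA : A.PosDef) (hP : P.PosSemidef) :
    ∃ r : ℝ, 1 ≤ r ∧ (A + P).det = A.det * r ∧ (r = 1 ↔ P = 0) := by
  set L := CFC.sqrt A with hLdef
  have hL2 : L * L = A := by
    have := CFC.sq_sqrt A hA.posSemidef.nonneg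
    rwa [pow_two] at this
  have hLh : L.IsHermitian := (Matrix.nonneg_iff_posSemidef.mp (CFC.sqrt_nonneg A)).1
  have hdet2 : L.det * L.det = A.det := by rw [← det_mul, hL2]
  have hdetL : IsUnit L.det := by
    rw [isUnit_iff_ne_zero]
    intro h
    exact hA.det_pos.ne' (by rw [← hdet2, h, mul_zero])
  have hLmulinv : L * L⁻¹ = 1 := mul_nonsing_inv _ hdetL
  have hLinvmul : L⁻¹ * L = 1 := nonsing_inv_mul _ hdetL
  have hLinvH : (L⁻¹)ᴴ = L⁻¹ := by rw [conjTranspose_nonsing_inv, hLh.eq]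
  set Q := L⁻¹ * P * L⁻¹ with hQdef
  have hQ : Q.PosSemidef := by
    have := hP.mul_mul_conjTranspose_same L⁻¹
    rwa [hLinvH] at this
  have decomp : A + P = L * (1 + Q) * L := by
    have h1 : L * (1 + Q) * L = L * L + (L * L⁻¹) * P * (L⁻¹ * L) := by
      simp only [hQdef, Matrix.mul_add, Matrix.add_mul, Matrix.mul_one, Matrix.one_mul,
        Matrix.mul_assoc]
    rw [h1, hL2, hLmulinv, hLinvmul, Matrix.one_mul, Matrix.mul_one]
  -- spectral theorem for Q
  have hQh := hQ.1
  set μ := hQh.eigenvalues with hμ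
  have hμnn : ∀ i, 0 ≤ μ i := fun i => hQ.eigenvalues_nonneg i
  have hspec := hQh.spectral_theorem
  rw [Unitary.conjStarAlgAut_apply] at hspec
  set V := (hQh.eigenvectorUnitary : Matrix n n ℂ) with hV
  have hVu : V * star V = 1 := Matrix.mem_unitaryGroup_iff.mp hQh.eigenvectorUnitary.2
  have hdet1Q : (1 + Q).det = ((∏ i, (1 + μ i) : ℝ) : ℂ) := by
    have h1Q : 1 + Q = V * (1 + diagonal (RCLike.ofReal ∘ μ)) * star V := by
      rw [Matrix.mul_add, Matrix.add_mul, Matrix.mul_one, hVu, ← hspec]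
    rw [h1Q, det_mul_right_comm, hVu, Matrix.one_mul]
    have : (1 : Matrix n n ℂ) + diagonal (RCLike.ofReal ∘ μ)
        = diagonal (fun i => 1 + (μ i : ℂ)) := by
      rw [← Matrix.diagonal_one, diagonal_add]
      rfl
    rw [this, det_diagonal]
    push_cast
    rfl
  have heq : (A + P).det = A.det * ((∏ i, (1 + μ i) : ℝ) : ℂ) := by
    rw [decomp, det_mul, det_mul, hdet1Q, ← hdet2]
    ring
  have hPLQL : P = L * Q * L := by
    have h1 : L * (1 + Q) * L = L * L + L * Q * L := by
      simp only [Matrix.mul_add, Matrix.add_mul, Matrix.mul_one, Matrix.one_mul]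
    have h2 := decomp
    rw [h1, hL2] at h2
    exact add_left_cancel h2
  refine ⟨∏ i, (1 + μ i), ?_, heq, ?_, ?_⟩
  · calc (1:ℝ) = ∏ _i : n, (1:ℝ) := by simp
      _ ≤ ∏ i, (1 + μ i) := Finset.prod_le_prod (by intros; norm_num)
          (fun i _ => by linarith [hμnn i])
  · -- r = 1 → P = 0
    intro hr
    have hμ0 : ∀ i, μ i = 0 := by
      by_contra hcon
      push_neg at hcon
      obtain ⟨j, hj⟩ := hcon
      have hjpos : 0 < μ j := lt_of_le_of_ne (hμnn j) (Ne.symm hj)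
      have : (1:ℝ) < ∏ i, (1 + μ i) := by
        calc (1:ℝ) = ∏ _i : n, (1:ℝ) := by simp
          _ < ∏ i, (1 + μ i) := Finset.prod_lt_prod (by intros; norm_num)
              (fun i _ => by linarith [hμnn i]) ⟨j, Finset.mem_univ j, by linarith⟩
      rw [hr] at this
      exact lt_irrefl _ this
    have hQ0 : Q = 0 := by
      rw [hspec]
      have : diagonal (RCLike.ofReal ∘ μ) = (0 : Matrix n n ℂ) := by
        have hf : (RCLike.ofReal ∘ μ : n → ℂ) = 0 := by
          funext i
          simp [hμ0 i]
        rw [hf]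
        exact Matrix.diagonal_zero
      rw [this, Matrix.mul_zero, Matrix.zero_mul]
    rw [hPLQL, hQ0, Matrix.mul_zero, Matrix.zero_mul]
  · -- P = 0 → r = 1
    intro hP0
    rw [hP0, add_zero] at heq
    have := (mul_right_eq_self₀.mp heq.symm).resolve_right hA.det_pos.ne'
    exact_mod_cast this

private lemma eq_zero_of_mul_posDef_mul_conjTranspose_eq_zero
    {C : Matrix n n ℂ} (hC : C.PosDef) (X : Matrix m n ℂ)
    (h : X * C * Xᴴ = 0) : X = 0 := by
  set S := CFC.sqrt C with hSdef
  have hS2 : S * S = C := by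
    have := CFC.sq_sqrt C hC.posSemidef.nonneg; rwa [pow_two] at this
  have hSh : S.IsHermitian := (Matrix.nonneg_iff_posSemidef.mp (CFC.sqrt_nonneg C)).1
  have hdet2 : S.det * S.det = C.det := by rw [← det_mul, hS2]
  have hdetS : IsUnit S.det := by
    rw [isUnit_iff_ne_zero]
    intro h0
    exact hC.det_pos.ne' (by rw [← hdet2, h0, mul_zero])
  have hfact : (X * S) * (X * S)ᴴ = 0 := by
    rw [conjTranspose_mul, hSh.eq]
    calc X * S * (S * Xᴴ) = X * (S * S) * Xᴴ := by
          simp only [Matrix.mul_assoc]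
      _ = 0 := by rw [hS2, h]
  have hXS : X * S = 0 := by
    have := (conjTranspose_mul_self_eq_zero (A := (X * S)ᴴ)).mp
      (by rwa [conjTranspose_conjTranspose])
    simpa using congrArg conjTranspose this
  calc X = X * (S * S⁻¹) := by rw [mul_nonsing_inv _ hdetS, Matrix.mul_one]
    _ = (X * S) * S⁻¹ := by rw [Matrix.mul_assoc]
    _ = 0 := by rw [hXS, Matrix.zero_mul]

private lemma key_identity (p q : ℕ) (Z W : Matrix (Fin p) (Fin q) ℂ)
    (hW : (1 - W * Wᴴ).PosDef) (hW' : (1 - Wᴴ * W).PosDef) :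
    (1 - Z * Wᴴ) * (1 - W * Wᴴ)⁻¹ * (1 - W * Zᴴ)
      = (1 - Z * Zᴴ) + (Z - W) * (1 - Wᴴ * W)⁻¹ * (Z - W)ᴴ := by
  set B := (1 - W * Wᴴ)⁻¹ with hBdef
  set C := (1 - Wᴴ * W)⁻¹ with hCdef
  have hBr : (1 - W * Wᴴ) * B = 1 := mul_nonsing_inv _ hW.det_pos.ne'.isUnit
  have hBl : B * (1 - W * Wᴴ) = 1 := nonsing_inv_mul _ hW.det_pos.ne'.isUnit
  have hCr : (1 - Wᴴ * W) * C = 1 := mul_nonsing_inv _ hW'.det_pos.ne'.isUnit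
  have hCl : C * (1 - Wᴴ * W) = 1 := nonsing_inv_mul _ hW'.det_pos.ne'.isUnit
  have e1 : Wᴴ * B = C * Wᴴ := by
    calc Wᴴ * B = (C * (1 - Wᴴ * W)) * (Wᴴ * B) := by rw [hCl, Matrix.one_mul]
      _ = C * (((1 - Wᴴ * W) * Wᴴ) * B) := by simp only [Matrix.mul_assoc]
      _ = C * ((Wᴴ * (1 - W * Wᴴ)) * B) := by
          congr 2
          simp only [Matrix.sub_mul, Matrix.mul_sub, Matrix.one_mul, Matrix.mul_one,
            Matrix.mul_assoc]
      _ = C * (Wᴴ * ((1 - W * Wᴴ) * B)) := by simp only [Matrix.mul_assoc]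
      _ = C * Wᴴ := by rw [hBr, Matrix.mul_one]
  have e2 : B * W = W * C := by
    calc B * W = (B * W) * ((1 - Wᴴ * W) * C) := by rw [hCr, Matrix.mul_one]
      _ = B * ((W * (1 - Wᴴ * W)) * C) := by simp only [Matrix.mul_assoc]
      _ = B * (((1 - W * Wᴴ) * W) * C) := by
          congr 2
          simp only [Matrix.sub_mul, Matrix.mul_sub, Matrix.one_mul, Matrix.mul_one,
            Matrix.mul_assoc]
      _ = (B * (1 - W * Wᴴ)) * (W * C) := by simp only [Matrix.mul_assoc]
      _ = W * C := by rw [hBl, Matrix.one_mul]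
  have e3 : B = 1 + W * C * Wᴴ := by
    refine inv_eq_right_inv ?_
    have expand : (1 - W * Wᴴ) * (1 + W * C * Wᴴ)
        = 1 + W * ((1 - Wᴴ * W) * C) * Wᴴ - W * Wᴴ := by
      simp only [Matrix.mul_add, Matrix.add_mul, Matrix.sub_mul, Matrix.mul_sub,
        Matrix.mul_one, Matrix.one_mul, Matrix.mul_assoc]
      abel
    rw [expand, hCr, Matrix.mul_one]
    abel
  have e5 : C * (Wᴴ * W) = C - 1 := by
    have : C * (Wᴴ * W) = C - C * (1 - Wᴴ * W) := by
      simp only [Matrix.mul_sub, Matrix.mul_one]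
      abel
    rw [this, hCl]
  have expand : (1 - Z * Wᴴ) * B * (1 - W * Zᴴ)
      = B - Z * (Wᴴ * B) - (B * W) * Zᴴ + Z * ((Wᴴ * B) * W) * Zᴴ := by
    simp only [Matrix.mul_sub, Matrix.sub_mul, Matrix.mul_one, Matrix.one_mul,
      Matrix.mul_assoc]
    abel
  rw [expand, e1, e2, e3]
  have e6 : (C * Wᴴ) * W = C - 1 := by rw [Matrix.mul_assoc, e5]
  rw [e6, conjTranspose_sub]
  simp only [Matrix.mul_sub, Matrix.sub_mul, Matrix.add_mul, Matrix.mul_add,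
    Matrix.mul_one, Matrix.one_mul, Matrix.mul_assoc]
  abel

end Aux

/-- For `Z, W` in the type I bounded symmetric domain `D_{p,q}` one has
`det(I − Z Zᴴ) · det(I − W Wᴴ) ≤ |det(I − Z Wᴴ)|²`, with equality iff `Z = W`. -/
theorem det_product_le_sq_abs_det_typeI (p q : ℕ) (hp : 1 ≤ p) (hq : 1 ≤ q)
    (Z W : Matrix (Fin p) (Fin q) ℂ)
    (hZ : Z ∈ typeIDomain p q) (hW : W ∈ typeIDomain p q) :
    ((1 - Z * Zᴴ).det.re * (1 - W * Wᴴ).det.re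
        ≤ ‖(1 - Z * Wᴴ).det‖ ^ 2) ∧
    ((1 - Z * Zᴴ).det.re * (1 - W * Wᴴ).det.re
        = ‖(1 - Z * Wᴴ).det‖ ^ 2 ↔ Z = W) := by
  have hZ' : (1 - Z * Zᴴ).PosDef := hZ
  have hWd : (1 - W * Wᴴ).PosDef := hW
  have hW' : (1 - Wᴴ * W).PosDef := posDef_one_sub_conjTranspose_mul W hWd
  have hC : ((1 - Wᴴ * W)⁻¹).PosDef := hW'.inv
  set C := (1 - Wᴴ * W)⁻¹ with hCdef
  set Pm := (Z - W) * C * (Z - W)ᴴ with hPmdef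
  have hPm : Pm.PosSemidef := hC.posSemidef.mul_mul_conjTranspose_same (Z - W)
  obtain ⟨r, hr1, heq, hiff⟩ := det_add_posSemidef hZ' hPm
  -- the key determinant relation
  set d := (1 - Z * Wᴴ).det with hd
  have hstar : (1 - W * Zᴴ) = (1 - Z * Wᴴ)ᴴ := by
    simp [conjTranspose_sub, conjTranspose_mul]
  have hdets : (1 - W * Wᴴ).det * ((1 - Z * Zᴴ) + Pm).det = d * star d := by
    have hkey := key_identity p q Z W hWd hW'
    have h1 : ((1 - Z * Zᴴ) + Pm).det = d * (1 - W * Wᴴ)⁻¹.det * star d := by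
      rw [← hkey, det_mul, det_mul, hstar, det_conjTranspose]
    rw [h1]
    have h2 : (1 - W * Wᴴ).det * (1 - W * Wᴴ)⁻¹.det = 1 := by
      rw [← det_mul, mul_nonsing_inv _ hWd.det_pos.ne'.isUnit, det_one]
    calc (1 - W * Wᴴ).det * (d * (1 - W * Wᴴ)⁻¹.det * star d)
        = ((1 - W * Wᴴ).det * (1 - W * Wᴴ)⁻¹.det) * (d * star d) := by ring
      _ = d * star d := by rw [h2, one_mul]
  -- real parts
  have hZim : (1 - Z * Zᴴ).det.im = 0 := by
    have := hZ'.det_pos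
    rw [Complex.lt_def] at this
    simpa using this.2.symm
  have hWim : (1 - W * Wᴴ).det.im = 0 := by
    have := hWd.det_pos
    rw [Complex.lt_def] at this
    simpa using this.2.symm
  have hZre : 0 < (1 - Z * Zᴴ).det.re := by
    have := hZ'.det_pos
    rw [Complex.lt_def] at this
    simpa using this.1
  have hWre : 0 < (1 - W * Wᴴ).det.re := by
    have := hWd.det_pos
    rw [Complex.lt_def] at this
    simpa using this.1
  set a := (1 - Z * Zᴴ).det.re with ha
  set b := (1 - W * Wᴴ).det.re with hb
  have hZc : (1 - Z * Zᴴ).det = (a : ℂ) := Complex.ext rfl (by simp [hZim])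
  have hWc : (1 - W * Wᴴ).det = (b : ℂ) := Complex.ext rfl (by simp [hWim])
  have habs : ‖d‖ ^ 2 = b * (a * r) := by
    have h1 : d * star d = ((‖d‖ ^ 2 : ℝ) : ℂ) := by
      rw [Complex.star_def, Complex.mul_conj, Complex.sq_norm]
    have h2 : ((b * (a * r) : ℝ) : ℂ) = ((‖d‖ ^ 2 : ℝ) : ℂ) := by
      rw [← h1, ← hdets, heq, hZc, hWc]
      push_cast
      ring
    exact (Complex.ofReal_inj.mp h2).symm
  -- equality between Pm = 0 and Z = W
  have hPmZW : Pm = 0 ↔ Z = W := by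
    constructor
    · intro h0
      have := eq_zero_of_mul_posDef_mul_conjTranspose_eq_zero hC (Z - W) h0
      exact sub_eq_zero.mp this
    · intro h
      rw [hPmdef, h, sub_self, Matrix.zero_mul, Matrix.zero_mul]
  constructor
  · rw [habs]
    nlinarith [hZre, hWre, hr1]
  · rw [habs]
    constructor
    · intro h
      have hr : r = 1 := by
        have h' : b * (a * 1) = b * (a * r) := by rw [mul_one]; linarith
        have h'' : a * 1 = a * r := mul_left_cancel₀ (ne_of_gt hWre) h'
        have := mul_left_cancel₀ (ne_of_gt hZre) h''
        linarith
      exact hPmZW.mp (hiff.mp hr)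
    · intro h
      have hr : r = 1 := hiff.mpr (hPmZW.mpr h)
      rw [hr]
      ring
end
end

section
/- Let 1 ≤ p ≤ q be integers, let w₀ ∈ M_{p×q}(ℂ) be a diagonal matrix, i.e. (w₀)_{ij} = 0 for i ≠ j, with diagonal entries d_i := (w₀)_{ii} satisfying |d_i| < 1 for all 1 ≤ i ≤ p, and let u(W) := −log det(I_p − W Wᴴ), which is defined and smooth on a neighborhood of w₀ in M_{p×q}(ℂ). For 1 ≤ i ≤ p and 1 ≤ j ≤ q, let E_{ij} ∈ M_{p×q}(ℂ) denote the matrix unit with (i,j) entry 1 and all other entries 0, and let L_{ij} denote the Laplacian at t = 0 of the function t ↦ u(w₀ + t E_{ij}) of the complex variable t (viewing ℂ ≅ ℝ²). Then: (a) if i = j, L_{ii} = 4/(1 − |d_i|²)²; (b) if i ≠ j and j ≤ p, L_{ij} = 4/((1 − |d_i|²)(1 − |d_j|²)); (c) if j > p, L_{ij} = 4/(1 − |d_i|²). -/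
open Matrix
open scoped ComplexConjugate

noncomputable section

attribute [local instance] Matrix.normedAddCommGroup Matrix.normedSpace

/-- The Laplacian at `0` of a function of one complex variable `t = x + iy`,
namely `∂²/∂x² + ∂²/∂y²` evaluated at `0`. -/
def laplacianAt (f : ℂ → ℝ) : ℝ :=
  iteratedDeriv 2 (fun x : ℝ => f (x : ℂ)) 0 +
  iteratedDeriv 2 (fun y : ℝ => f ((y : ℂ) * Complex.I)) 0

/-- `u(W) = − log det(I − W Wᴴ)` on the type I domain. -/
def negLogDetI (p q : ℕ) (W : Matrix (Fin p) (Fin q) ℂ) : ℝ :=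
  -Real.log ((1 - W * Wᴴ).det.re)

lemma deriv_key (K α β : ℝ) (hK : 0 < K) (hD : 0 < α - β^2) :
    iteratedDeriv 2 (fun s : ℝ => -Real.log (K * (α - (β + s)^2))) 0
      = 2/(α - β^2) + 4*β^2/(α - β^2)^2 := by
  set f : ℝ → ℝ := fun s => -Real.log (K * (α - (β + s)^2)) with hf
  set P : ℝ → ℝ := fun s => α - (β + s)^2 with hP
  set g : ℝ → ℝ := fun s => 2*(β + s) / P s with hg
  have hU : IsOpen {s : ℝ | 0 < P s} := by
    apply isOpen_lt continuous_const
    fun_prop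
  have h0 : (0:ℝ) ∈ {s : ℝ | 0 < P s} := by simp only [Set.mem_setOf_eq, hP]; nlinarith
  have hPd : ∀ s : ℝ, HasDerivAt P (-(2*(β + s))) s := by
    intro s
    have h1 : HasDerivAt (fun s : ℝ => (β + s)^2) (2*(β+s)^1*1) s :=
      (((hasDerivAt_id s).const_add β).pow 2)
    simpa using h1.const_sub α
  have hderiv : ∀ s ∈ {s : ℝ | 0 < P s}, HasDerivAt f (g s) s := by
    intro s hs
    have hne : K * P s ≠ 0 := ne_of_gt (mul_pos hK hs)
    have h2 : HasDerivAt (fun s => K * P s) (K * (-(2*(β+s)))) s := (hPd s).const_mul K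
    have h3 : HasDerivAt (fun s => Real.log (K * P s)) ((K * P s)⁻¹ * (K * (-(2*(β+s))))) s :=
      by have := (Real.hasDerivAt_log hne).comp s h2; exact this
    have : HasDerivAt f (-((K * P s)⁻¹ * (K * (-(2*(β+s)))))) s := h3.neg
    convert this using 1
    have hPs : P s ≠ 0 := ne_of_gt hs
    rw [hg]
    field_simp
  have hfg : deriv f =ᶠ[nhds 0] g := by
    filter_upwards [hU.mem_nhds h0] with s hs
    exact (hderiv s hs).deriv
  have h2 : iteratedDeriv 2 f 0 = deriv (deriv f) 0 := by
    rw [iteratedDeriv_succ, iteratedDeriv_one]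
  rw [h2, Filter.EventuallyEq.deriv_eq hfg]
  have hP0 : P 0 ≠ 0 := by simp only [hP]; intro h; nlinarith
  have hgd : HasDerivAt g ((2 * P 0 - 2*(β+0) * (-(2*(β+0)))) / (P 0)^2) 0 := by
    have hNum : HasDerivAt (fun s : ℝ => 2*(β + s)) 2 0 := by
      simpa using ((hasDerivAt_id (0:ℝ)).const_add β).const_mul 2
    exact hNum.div (hPd 0) hP0
  rw [hgd.deriv]
  have : P 0 = α - β^2 := by simp [hP]
  rw [this]
  field_simp
  ring

lemma lapA (f : ℂ → ℝ) (K A : ℝ) (hK : 0 < K) (hA : 0 < A)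
    (hf : ∀ t : ℂ, f t = -Real.log (K * (A - Complex.normSq t))) :
    laplacianAt f = 4 / A := by
  have hx : (fun x : ℝ => f ↑x) = fun s : ℝ => -Real.log (K * (A - (0 + s)^2)) := by
    funext s; rw [hf]
    congr 2
    rw [Complex.normSq_ofReal]; ring
  have hy : (fun y : ℝ => f (↑y * Complex.I)) = fun s : ℝ => -Real.log (K * (A - (0 + s)^2)) := by
    funext s; rw [hf]
    congr 2
    rw [Complex.normSq_mul, Complex.normSq_ofReal, Complex.normSq_I]; ring
  unfold laplacianAt
  rw [hx, hy, deriv_key K A 0 hK (by simpa using hA)]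
  have hA0 : A ≠ 0 := ne_of_gt hA
  norm_num
  field_simp
  ring

lemma lapB (f : ℂ → ℝ) (K : ℝ) (dd : ℂ) (hK : 0 < K) (hA : Complex.normSq dd < 1)
    (hf : ∀ t : ℂ, f t = -Real.log (K * (1 - Complex.normSq (dd + t)))) :
    laplacianAt f = 4 / (1 - Complex.normSq dd)^2 := by
  have hx : (fun x : ℝ => f ↑x)
      = fun s : ℝ => -Real.log (K * ((1 - dd.im^2) - (dd.re + s)^2)) := by
    funext s; rw [hf]
    congr 2
    simp only [Complex.normSq_apply, Complex.add_re, Complex.add_im, Complex.mul_re,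
      Complex.mul_im, Complex.I_re, Complex.I_im, Complex.ofReal_re, Complex.ofReal_im]
    ring
  have hy : (fun y : ℝ => f (↑y * Complex.I))
      = fun s : ℝ => -Real.log (K * ((1 - dd.re^2) - (dd.im + s)^2)) := by
    funext s; rw [hf]
    congr 2
    simp only [Complex.normSq_apply, Complex.add_re, Complex.add_im, Complex.mul_re,
      Complex.mul_im, Complex.I_re, Complex.I_im, Complex.ofReal_re, Complex.ofReal_im]
    ring
  have hns : Complex.normSq dd = dd.re^2 + dd.im^2 := by
    rw [Complex.normSq_apply]; ring
  have h1 : 0 < (1 - dd.im^2) - dd.re^2 := by nlinarith [hA, hns]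
  have h2 : 0 < (1 - dd.re^2) - dd.im^2 := by nlinarith [hA, hns]
  unfold laplacianAt
  rw [hx, hy, deriv_key K _ _ hK h1, deriv_key K _ _ hK h2]
  rw [hns]
  have e1 : (1 - dd.im ^ 2 - dd.re ^ 2) = 1 - (dd.re^2 + dd.im^2) := by ring
  have e2 : (1 - dd.re ^ 2 - dd.im ^ 2) = 1 - (dd.re^2 + dd.im^2) := by ring
  rw [e1, e2]
  have hA0 : (0:ℝ) < 1 - (dd.re^2 + dd.im^2) := by nlinarith [hA, hns]
  field_simp
  ring

lemma entry_lemma (p q : ℕ) (hpq : p ≤ q) (w₀ : Matrix (Fin p) (Fin q) ℂ)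
    (hdiag : ∀ (i : Fin p) (j : Fin q), (i : ℕ) ≠ (j : ℕ) → w₀ i j = 0)
    (i : Fin p) (j : Fin q) (t : ℂ) (k l : Fin p) :
    (((w₀ + t • single i j 1) * (w₀ + t • single i j 1)ᴴ : Matrix (Fin p) (Fin p) ℂ)) k l =
      (if l = k then w₀ k (Fin.castLE hpq k) * conj (w₀ k (Fin.castLE hpq k)) else 0)
      + (if k = i then t * conj (w₀ l j) else 0)
      + (if l = i then conj t * w₀ k j else 0)
      + (if k = i ∧ l = i then t * conj t else 0) := by
  set d : Fin p → ℂ := fun a => w₀ a (Fin.castLE hpq a) with hdd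
  have hw : ∀ (a : Fin p) (b : Fin q), w₀ a b = if b = Fin.castLE hpq a then d a else 0 := by
    intro a b
    by_cases h : b = Fin.castLE hpq a
    · simp [h, hdd]
    · rw [if_neg h, hdiag]
      intro hab
      exact h (Fin.ext hab.symm)
  have hcinj : ∀ a b : Fin p, Fin.castLE hpq a = Fin.castLE hpq b → a = b :=
    fun a b h => Fin.ext (by simpa using congrArg Fin.val h)
  conv_lhs => rw [Matrix.mul_apply]
  by_cases hk : k = i <;> by_cases hl : l = i <;>
    simp only [Matrix.add_apply, Matrix.conjTranspose_apply, Matrix.smul_apply,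
      Matrix.single, Matrix.of_apply, smul_eq_mul, hw, hk, hl, if_pos, if_neg,
      eq_self_iff_true, true_and, and_true] <;>
    simp only [@eq_comm _ j] <;>
    simp only [star_add, star_mul', apply_ite (star : ℂ → ℂ), star_zero, star_one]
  · simp only [Finset.sum_add_distrib, add_mul, mul_add, mul_ite, ite_mul, zero_mul, mul_zero,
      Finset.sum_ite_eq, Finset.sum_ite_eq', Finset.mem_univ, if_true]
    by_cases hji : Fin.castLE hpq i = j <;> simp [hji, @eq_comm _ j] <;> ring
  · have hl' : ¬ (i = l) := fun h => hl h.symm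
    simp only [hl', false_and, if_false, add_zero, mul_zero, zero_mul,
      Finset.sum_add_distrib, add_mul, mul_add, mul_ite, ite_mul,
      Finset.sum_ite_eq, Finset.sum_ite_eq', Finset.mem_univ, if_true, Finset.sum_const_zero,
      zero_add]
    by_cases hji : Fin.castLE hpq l = j <;>
      simp [hji, @eq_comm _ j] <;>
      first
        | ring1
        | (rw [if_neg (fun h : Fin.castLE hpq i = j => hl (hcinj l i (hji.trans h.symm)))]; ring)
        | (intro h; exact absurd (hcinj l i (hji.trans h.symm)) hl)
        | (intro h; exact absurd h hl)
  · have hk' : ¬ (i = k) := fun h => hk h.symm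
    simp only [hk', false_and, and_false, if_false, add_zero, mul_zero, zero_mul,
      Finset.sum_add_distrib, add_mul, mul_add, mul_ite, ite_mul,
      Finset.sum_ite_eq, Finset.sum_ite_eq', Finset.mem_univ, if_true, Finset.sum_const_zero,
      zero_add]
    by_cases hji : Fin.castLE hpq k = j <;>
      simp [hji, @eq_comm _ j] <;>
      first
        | ring1
        | (rw [if_neg (fun h : Fin.castLE hpq i = j => hk (hcinj k i (hji.trans h.symm)))]; ring)
        | (intro h; exact absurd (hcinj k i (hji.trans h.symm)) hk)
        | (intro h; exact absurd h.symm hk)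
  · have hk' : ¬ (i = k) := fun h => hk h.symm
    have hl' : ¬ (i = l) := fun h => hl h.symm
    simp only [hk', hl', false_and, and_false, if_false, add_zero, mul_zero, zero_mul,
      Finset.sum_add_distrib, add_mul, mul_add, mul_ite, ite_mul,
      Finset.sum_ite_eq, Finset.sum_ite_eq', Finset.mem_univ, if_true, Finset.sum_const_zero,
      zero_add, Fin.castLE_inj]
    by_cases hlk : l = k <;> simp [hlk]

/-- At a diagonal point `w₀` of `D_{p,q}` with diagonal entries `d_i`, the Laplacian of
`u(W) = −log det(I − W Wᴴ)` along the matrix-unit direction `E_{ij}` equals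
`4/(1−|d_i|²)²` if `i = j`, `4/((1−|d_i|²)(1−|d_j|²))` if `i ≠ j ≤ p`, and
`4/(1−|d_i|²)` if `j > p`. -/
theorem laplacian_negLogDet_at_diagonal (p q : ℕ) (hp : 1 ≤ p) (hpq : p ≤ q)
    (w₀ : Matrix (Fin p) (Fin q) ℂ)
    (hdiag : ∀ (i : Fin p) (j : Fin q), (i : ℕ) ≠ (j : ℕ) → w₀ i j = 0)
    (hd : ∀ i : Fin p, ‖w₀ i (Fin.castLE hpq i)‖ < 1) :
    (∀ i : Fin p,
      laplacianAt (fun t : ℂ =>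
          negLogDetI p q (w₀ + t • single i (Fin.castLE hpq i) (1 : ℂ)))
        = 4 / (1 - ‖w₀ i (Fin.castLE hpq i)‖ ^ 2) ^ 2) ∧
    (∀ (i : Fin p) (j : Fin q) (hj : (j : ℕ) < p), (i : ℕ) ≠ (j : ℕ) →
      laplacianAt (fun t : ℂ =>
          negLogDetI p q (w₀ + t • single i j (1 : ℂ)))
        = 4 / ((1 - ‖w₀ i (Fin.castLE hpq i)‖ ^ 2) *
            (1 - ‖w₀ ⟨(j : ℕ), hj⟩ (Fin.castLE hpq ⟨(j : ℕ), hj⟩)‖ ^ 2))) ∧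
    (∀ (i : Fin p) (j : Fin q), p ≤ (j : ℕ) →
      laplacianAt (fun t : ℂ =>
          negLogDetI p q (w₀ + t • single i j (1 : ℂ)))
        = 4 / (1 - ‖w₀ i (Fin.castLE hpq i)‖ ^ 2)) := by
  have habs : ∀ z : ℂ, ‖z‖ ^ 2 = Complex.normSq z := fun z => Complex.sq_norm z
  have hd' : ∀ k : Fin p, 0 < 1 - Complex.normSq (w₀ k (Fin.castLE hpq k)) := by
    intro k
    have h := hd k
    have h2 : Complex.normSq (w₀ k (Fin.castLE hpq k)) < 1 := by
      rw [← habs]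
      nlinarith [norm_nonneg (w₀ k (Fin.castLE hpq k))]
    linarith
  refine ⟨?_, ?_, ?_⟩
  · -- case (a) : diagonal direction
    intro i
    set K : ℝ := ∏ k ∈ Finset.univ.erase i, (1 - Complex.normSq (w₀ k (Fin.castLE hpq k))) with hK
    have hKpos : 0 < K := Finset.prod_pos (fun k _ => hd' k)
    have hn1 : Complex.normSq (w₀ i (Fin.castLE hpq i)) < 1 := by have := hd' i; linarith
    rw [show (4:ℝ) / (1 - ‖w₀ i (Fin.castLE hpq i)‖ ^ 2) ^ 2
        = 4 / (1 - Complex.normSq (w₀ i (Fin.castLE hpq i))) ^ 2 by rw [habs]]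
    apply lapB _ K _ hKpos hn1
    intro t
    have hwlj0 : ∀ l : Fin p, l ≠ i → w₀ l (Fin.castLE hpq i) = 0 := by
      intro l hli
      exact hdiag l _ (by simpa using fun h => hli (Fin.ext h))
    have hM : (1 - (w₀ + t • single i (Fin.castLE hpq i) 1) *
          (w₀ + t • single i (Fin.castLE hpq i) 1)ᴴ : Matrix (Fin p) (Fin p) ℂ)
        = Matrix.diagonal (fun k => ((if k = i then 1 - Complex.normSq (w₀ i (Fin.castLE hpq i) + t)
            else 1 - Complex.normSq (w₀ k (Fin.castLE hpq k)) : ℝ) : ℂ)) := by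
      ext k l
      rw [Matrix.sub_apply, entry_lemma p q hpq w₀ hdiag i (Fin.castLE hpq i) t k l]
      by_cases hkl : l = k
      · subst hkl
        by_cases hki : l = i
        · subst hki
          simp only [Matrix.one_apply_eq, Matrix.diagonal_apply_eq, if_pos rfl, and_self, if_true, eq_self_iff_true]
          rw [Complex.ofReal_sub, Complex.ofReal_one, ← Complex.mul_conj]
          simp only [map_add]
          ring
        · simp only [Matrix.one_apply_eq, Matrix.diagonal_apply_eq, if_pos rfl,
            if_neg hki, and_self, if_true, eq_self_iff_true, add_zero]
          rw [Complex.ofReal_sub, Complex.ofReal_one, ← Complex.mul_conj]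
      · have hne : ¬ (k = i ∧ l = i) := fun hh => hkl (hh.2.trans hh.1.symm)
        rw [Matrix.one_apply_ne (fun h => hkl h.symm), Matrix.diagonal_apply_ne' _ hkl]
        by_cases hki : k = i
        · have hli : ¬ l = i := fun h => hne ⟨hki, h⟩
          rw [hwlj0 l hli]
          simp [hkl, hki, hli, hne]
        · by_cases hli : l = i
          · rw [hwlj0 k hki]
            simp [hkl, hki, hli, hne, show ¬ i = k from fun h => hki h.symm]
          · simp [hkl, hki, hli, hne, show ¬ i = k from fun h => hki h.symm]
    unfold negLogDetI
    rw [hM, Matrix.det_diagonal, ← Complex.ofReal_prod, Complex.ofReal_re]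
    congr 1
    rw [← Finset.mul_prod_erase Finset.univ _ (Finset.mem_univ i)]
    have hKrw : ∏ k ∈ Finset.univ.erase i,
        (if k = i then 1 - Complex.normSq (w₀ i (Fin.castLE hpq i) + t)
          else 1 - Complex.normSq (w₀ k (Fin.castLE hpq k))) = K := by
      rw [hK]
      exact Finset.prod_congr rfl (fun k hk => by rw [if_neg (Finset.ne_of_mem_erase hk)])
    rw [hKrw, if_pos rfl]
    ring
  · -- case (b)
    intro i j hj hij
    rw [show (4:ℝ) / ((1 - ‖w₀ i (Fin.castLE hpq i)‖ ^ 2) *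
          (1 - ‖w₀ ⟨(j:ℕ), hj⟩ (Fin.castLE hpq ⟨(j:ℕ), hj⟩)‖ ^ 2))
        = 4 / ((1 - Complex.normSq (w₀ i (Fin.castLE hpq i))) *
          (1 - Complex.normSq (w₀ ⟨(j:ℕ), hj⟩ (Fin.castLE hpq ⟨(j:ℕ), hj⟩)))) by
      rw [habs, habs]]
    set j' : Fin p := (⟨(j:ℕ), hj⟩ : Fin p) with hj'
    have hij' : i ≠ j' := fun h => hij (by rw [h, hj'])
    have hji' : j' ≠ i := fun h => hij' h.symm
    have hcj : Fin.castLE hpq j' = j := by apply Fin.ext; simp [hj']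
    set di : ℂ := w₀ i (Fin.castLE hpq i) with hdi
    set dj : ℂ := w₀ j' (Fin.castLE hpq j') with hdj
    set A : ℝ := 1 - Complex.normSq di with hA
    set B : ℝ := 1 - Complex.normSq dj with hB
    have hApos : 0 < A := hd' i
    have hBpos : 0 < B := hd' j'
    have hBne : (B : ℂ) ≠ 0 := by
      simpa using Complex.ofReal_ne_zero.mpr (ne_of_gt hBpos)
    set K2 : ℝ := ∏ k ∈ (Finset.univ.erase i).erase j',
        (1 - Complex.normSq (w₀ k (Fin.castLE hpq k))) with hK2
    have hK2pos : 0 < K2 := Finset.prod_pos (fun k _ => hd' k)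
    apply lapA _ K2 (A * B) hK2pos (mul_pos hApos hBpos)
    intro t
    have hwlj : ∀ l : Fin p, w₀ l j = if l = j' then dj else 0 := by
      intro l
      by_cases hlj : l = j'
      · rw [if_pos hlj, hlj, hdj, ← hcj]
      · rw [if_neg hlj]
        exact hdiag l j (fun h => hlj (Fin.ext (by simp [hj', ← h])))
    unfold negLogDetI
    set Mt : Matrix (Fin p) (Fin p) ℂ :=
      (1 - (w₀ + t • single i j 1) * (w₀ + t • single i j 1)ᴴ) with hMt
    have hMte : ∀ k l : Fin p, Mt k l =
        (if k = l then (1:ℂ) else 0) -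
        ((if l = k then w₀ k (Fin.castLE hpq k) * conj (w₀ k (Fin.castLE hpq k)) else 0)
          + (if k = i then t * conj (if l = j' then dj else 0) else 0)
          + (if l = i then conj t * (if k = j' then dj else 0) else 0)
          + (if k = i ∧ l = i then t * conj t else 0)) := by
      intro k l
      rw [hMt, Matrix.sub_apply, Matrix.one_apply,
        entry_lemma p q hpq w₀ hdiag i j t k l, hwlj l, hwlj k]
    -- individual entries
    have e_ii : Mt i i = 1 - di * conj di - t * conj t := by
      rw [hMte]
      simp only [if_pos rfl, and_self, if_true, eq_self_iff_true, if_neg hij', map_zero,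
        mul_zero, zero_mul, add_zero]
      rw [← hdi]; ring
    have e_ij : Mt i j' = -(t * conj dj) := by
      rw [hMte]
      simp only [if_neg hji', if_pos rfl, if_neg hij', and_false, if_false, mul_zero,
        zero_mul, add_zero, zero_add, eq_self_iff_true, if_true, true_and, and_true]
      ring
    have e_ji : Mt j' i = -(conj t * dj) := by
      rw [hMte]
      simp only [if_neg hij', if_pos rfl, if_neg hji', false_and, if_false, mul_zero,
        map_zero, zero_mul, add_zero, zero_add, eq_self_iff_true, if_true, true_and, and_true]
      ring
    have e_jj : Mt j' j' = (B : ℂ) := by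
      rw [hMte]
      simp only [if_pos rfl, and_self, if_true, eq_self_iff_true, if_neg hji', map_zero,
        mul_zero, zero_mul, add_zero]
      rw [hB, ← hdj]
      push_cast
      rw [← Complex.mul_conj]
    have e_row_other : ∀ k l : Fin p, k ≠ i → ¬ l = k → l ≠ i → Mt k l = 0 := by
      intro k l hki hlk hli
      rw [hMte]
      simp [hki, hlk, hli, show ¬ k = l from fun h => hlk h.symm]
    have e_row_j : ∀ l : Fin p, l ≠ i → l ≠ j' → Mt j' l = 0 := by
      intro l hli hlj
      exact e_row_other j' l hji' (fun h => hlj (by rw [h]) ) hli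
    have e_col_i : ∀ k : Fin p, k ≠ i → k ≠ j' → Mt k i = 0 := by
      intro k hki hkj
      rw [hMte]
      simp [hki, hkj, show ¬ i = k from fun h => hki h.symm,
        show ¬ k = i from hki]
    have e_row_i0 : ∀ l : Fin p, l ≠ i → l ≠ j' → Mt i l = 0 := by
      intro l hli hlj
      rw [hMte]
      simp [hli, hlj, show ¬ i = l from fun h => hli h.symm,
        show ¬ l = i from hli]
    have e_diag_other : ∀ k : Fin p, k ≠ i → k ≠ j' →
        Mt k k = ((1 - Complex.normSq (w₀ k (Fin.castLE hpq k)) : ℝ) : ℂ) := by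
      intro k hki hkj
      rw [hMte]
      simp only [if_pos rfl, and_self, if_neg hki, if_neg hkj, eq_self_iff_true, if_true,
        map_zero, mul_zero, zero_mul, add_zero]
      push_cast
      rw [← Complex.mul_conj]
    set c₁ : ℂ := t * conj dj * (B : ℂ)⁻¹ with hc₁
    set c₂ : ℂ := conj t * dj * (B : ℂ)⁻¹ with hc₂
    set M' : Matrix (Fin p) (Fin p) ℂ := Mt.updateRow i (Mt i + c₁ • Mt j') with hM'
    have hdet1 : M'.det = Mt.det := Matrix.det_updateRow_add_smul_self Mt hij' c₁
    have hdet2 : (M'.updateCol i fun k => M' k i + c₂ • M' k j').det = M'.det :=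
      Matrix.det_updateCol_add_smul_self M' hij' c₂
    set r : Fin p → ℝ := fun k =>
      if k = i then A - Complex.normSq t - Complex.normSq t * Complex.normSq dj / B
      else if k = j' then B else 1 - Complex.normSq (w₀ k (Fin.castLE hpq k)) with hr
    have hri : ((r i : ℝ) : ℂ)
        = 1 - di * conj di - t * conj t - t * conj t * (dj * conj dj) * (B:ℂ)⁻¹ := by
      simp only [hr, eq_self_iff_true, if_true]
      rw [hA]
      push_cast
      rw [← Complex.mul_conj, ← Complex.mul_conj, ← Complex.mul_conj]
      field_simp
    have hrj : r j' = B := by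
      simp only [hr, eq_self_iff_true, if_true]
      rw [if_neg hji']
    have hMdiag : (M'.updateCol i fun k => M' k i + c₂ • M' k j')
        = Matrix.diagonal (fun k => ((r k : ℝ) : ℂ)) := by
      ext k l
      rw [Matrix.updateCol_apply]
      by_cases hli : l = i
      · rw [if_pos hli, hli]
        by_cases hki : k = i
        · rw [hki, Matrix.diagonal_apply_eq]
          rw [hM', Matrix.updateRow_self]
          simp only [Pi.add_apply, Pi.smul_apply, smul_eq_mul]
          rw [e_ii, e_ji, e_ij, e_jj, hri, hc₁, hc₂]
          field_simp
          ring
        · by_cases hkj : k = j'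
          · rw [hkj, Matrix.diagonal_apply_ne _ hji']
            simp only [hM', Matrix.updateRow_ne hji']
            simp only [smul_eq_mul]
            rw [e_ji, e_jj, hc₂]
            field_simp
            ring
          · rw [Matrix.diagonal_apply_ne _ hki]
            simp only [hM', Matrix.updateRow_ne hki]
            simp only [smul_eq_mul]
            rw [e_col_i k hki hkj, e_row_other k j' hki (fun h => hkj (by rw [h])) hji']
            ring
      · rw [if_neg hli]
        by_cases hki : k = i
        · rw [hki, hM', Matrix.updateRow_self]
          simp only [Pi.add_apply, Pi.smul_apply, smul_eq_mul]
          by_cases hlj : l = j'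
          · rw [hlj, Matrix.diagonal_apply_ne _ hij']
            rw [e_ij, e_jj, hc₁]
            field_simp
            ring
          · rw [Matrix.diagonal_apply_ne' _ hli]
            rw [e_row_i0 l hli hlj, e_row_j l hli hlj]
            ring
        · rw [hM', Matrix.updateRow_ne hki]
          by_cases hlk : l = k
          · rw [hlk, Matrix.diagonal_apply_eq]
            by_cases hkj : k = j'
            · rw [hkj, e_jj, hrj]
            · rw [e_diag_other k hki hkj]
              simp only [hr]
              rw [if_neg hki, if_neg hkj]
          · rw [Matrix.diagonal_apply_ne' _ hlk]
            exact e_row_other k l hki hlk hli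
    have hdetMt : Mt.det = ∏ k, ((r k : ℝ) : ℂ) := by
      rw [← hdet1, ← hdet2, hMdiag, Matrix.det_diagonal]
    rw [hdetMt, ← Complex.ofReal_prod, Complex.ofReal_re]
    congr 2
    rw [← Finset.mul_prod_erase Finset.univ r (Finset.mem_univ i)]
    rw [← Finset.mul_prod_erase (Finset.univ.erase i) r
      (Finset.mem_erase.mpr ⟨hji', Finset.mem_univ j'⟩)]
    have hK2rw : ∏ k ∈ (Finset.univ.erase i).erase j', r k = K2 := by
      rw [hK2]
      refine Finset.prod_congr rfl (fun k hk => ?_)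
      have hkj := Finset.ne_of_mem_erase hk
      have hki := Finset.ne_of_mem_erase (Finset.mem_of_mem_erase hk)
      simp only [hr]
      rw [if_neg hki, if_neg hkj]
    rw [hK2rw, hrj]
    have hri2 : r i = A - Complex.normSq t - Complex.normSq t * Complex.normSq dj / B := by
      simp only [hr, eq_self_iff_true, if_true]
    rw [hri2, hB]
    have hB0 : (1:ℝ) - Complex.normSq dj ≠ 0 := hBpos.ne'
    field_simp
    ring
  · -- case (c)
    intro i j hpj
    set K : ℝ := ∏ k ∈ Finset.univ.erase i, (1 - Complex.normSq (w₀ k (Fin.castLE hpq k))) with hK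
    have hKpos : 0 < K := Finset.prod_pos (fun k _ => hd' k)
    rw [show (4 : ℝ) / (1 - ‖w₀ i (Fin.castLE hpq i)‖ ^ 2)
        = 4 / (1 - Complex.normSq (w₀ i (Fin.castLE hpq i))) by rw [habs]]
    apply lapA _ K _ hKpos (hd' i)
    intro t
    have hwlj : ∀ l : Fin p, w₀ l j = 0 := fun l => hdiag l j (by have := l.isLt; omega)
    have hM : (1 - (w₀ + t • single i j 1) * (w₀ + t • single i j 1)ᴴ
          : Matrix (Fin p) (Fin p) ℂ)
        = Matrix.diagonal (fun k => ((1 - Complex.normSq (w₀ k (Fin.castLE hpq k))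
            - (if k = i then Complex.normSq t else 0) : ℝ) : ℂ)) := by
      ext k l
      rw [Matrix.sub_apply, entry_lemma p q hpq w₀ hdiag i j t k l]
      simp only [hwlj, map_zero, mul_zero, zero_mul, ite_self, add_zero]
      by_cases hkl : l = k
      · subst hkl
        by_cases hki : l = i <;>
          simp [Matrix.one_apply, Matrix.diagonal, hki, Complex.mul_conj] <;> push_cast <;> ring
      · have hne : ¬ (k = i ∧ l = i) := fun ⟨h1, h2⟩ => hkl (h2.trans h1.symm)
        have hkl' : ¬ (k = l) := fun h => hkl h.symm
        simp [Matrix.one_apply, hkl, hkl', hne, Matrix.diagonal_apply_ne' _ hkl]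
    unfold negLogDetI
    rw [hM, Matrix.det_diagonal, ← Complex.ofReal_prod, Complex.ofReal_re]
    congr 1
    rw [← Finset.mul_prod_erase Finset.univ _ (Finset.mem_univ i)]
    have hKrw : ∏ k ∈ Finset.univ.erase i, ((1 : ℝ) - Complex.normSq (w₀ k (Fin.castLE hpq k))
        - (if k = i then Complex.normSq t else 0)) = K := by
      rw [hK]
      exact Finset.prod_congr rfl (fun k hk => by
        rw [if_neg (Finset.ne_of_mem_erase hk), sub_zero])
    rw [hKrw, if_pos rfl]
    ring
end
end

section
/- Let 1 ≤ p ≤ q be integers, let w₀ ∈ M_{p×q}(ℂ) be a diagonal matrix, i.e. (w₀)_{ij} = 0 for i ≠ j, with diagonal entries d_i := (w₀)_{ii} satisfying |d_i| < 1 for all 1 ≤ i ≤ p, and let u(W) := −log det(I_p − W Wᴴ), defined and smooth near w₀. Then for every X ∈ M_{p×q}(ℂ), the Laplacian at t = 0 of the function t ↦ u(w₀ + t X) of the complex variable t (viewing ℂ ≅ ℝ²) is at least 4 Σ_{i,j} |X_{ij}|². In other words, at every diagonal point of D_{p,q}, the complex Hessian of −log det(I_p − W Wᴴ) dominates the Euclidean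 (Frobenius) Hermitian form. -/
open Matrix
open scoped ComplexConjugate

noncomputable section

attribute [local instance] Matrix.normedAddCommGroup Matrix.normedSpace

section AuxNLD
open Finset
variable {n : ℕ} (r : Fin n → ℝ) (G C : Matrix (Fin n) (Fin n) ℂ)

/-- the matrix path -/
def Nm (x : ℝ) : Matrix (Fin n) (Fin n) ℂ :=
  Matrix.diagonal (fun i => (r i : ℂ)) - (x : ℂ) • G - ((x : ℂ)^2) • C

lemma Nm_apply (x : ℝ) (i j : Fin n) :
    Nm r G C x i j = Matrix.diagonal (fun i => (r i : ℂ)) i j - (x:ℂ) * G i j - (x:ℂ)^2 * C i j := by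
  simp [Nm, Matrix.sub_apply, Matrix.smul_apply, smul_eq_mul]

lemma hasDerivAt_entry (x : ℝ) (i j : Fin n) :
    HasDerivAt (fun x : ℝ => Nm r G C x i j) (-(G i j) - (2*(x:ℂ)) * C i j) x := by
  have h1 : HasDerivAt (fun x : ℝ => ((x:ℂ))) 1 x := Complex.ofRealCLM.hasDerivAt
  have h2 : HasDerivAt (fun x : ℝ => ((x:ℂ)) * G i j) (G i j) x := by
    simpa using h1.mul_const (G i j)
  have h3 : HasDerivAt (fun x : ℝ => ((x:ℂ))^2 * C i j) ((2*(x:ℂ)) * C i j) x := by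
    have h := (h1.mul h1).mul_const (C i j)
    have hf : (fun x:ℝ => ((x:ℂ))^2 * C i j) = fun x:ℝ => ((x:ℂ) * (x:ℂ)) * C i j := by
      funext y; ring
    have e : (2*(x:ℂ)) * C i j = (1 * (x:ℂ) + (x:ℂ) * 1) * C i j := by ring
    rw [hf, e]; exact h
  have h0 : HasDerivAt (fun _ : ℝ => Matrix.diagonal (fun i => (r i : ℂ)) i j) 0 x :=
    hasDerivAt_const _ _
  simpa [Nm_apply, sub_eq_add_neg, Matrix.sub_apply, Matrix.smul_apply, smul_eq_mul] using
    (h0.fun_sub h2).fun_sub h3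

/-- entry derivative -/
def ent' (x : ℝ) (i j : Fin n) : ℂ := -(G i j) - (2*(x:ℂ)) * C i j

def Q1 (x : ℝ) : ℂ :=
  ∑ σ : Equiv.Perm (Fin n), ((Equiv.Perm.sign σ : ℤ) : ℂ) *
    ∑ i, (∏ j ∈ univ.erase i, Nm r G C x (σ j) j) * ent' G C x (σ i) i

def Q2 (x : ℝ) : ℂ :=
  ∑ σ : Equiv.Perm (Fin n), ((Equiv.Perm.sign σ : ℤ) : ℂ) *
    ∑ i, ((∑ k ∈ univ.erase i, (∏ j ∈ (univ.erase i).erase k, Nm r G C x (σ j) j) *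
            ent' G C x (σ k) k) * ent' G C x (σ i) i
        + (∏ j ∈ univ.erase i, Nm r G C x (σ j) j) * (-(2:ℂ) * C (σ i) i))

lemma hasDerivAt_ent' (x : ℝ) (i j : Fin n) :
    HasDerivAt (fun x : ℝ => ent' G C x i j) (-(2:ℂ) * C i j) x := by
  have h1 : HasDerivAt (fun x : ℝ => ((x:ℂ))) 1 x := Complex.ofRealCLM.hasDerivAt
  have h2 : HasDerivAt (fun x : ℝ => (2*(x:ℂ)) * C i j) ((2:ℂ) * C i j) x := by
    have := (h1.const_mul (2:ℂ)).mul_const (C i j)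
    simpa using this
  simpa [ent', sub_eq_add_neg] using (hasDerivAt_const x (-(G i j))).fun_sub h2

lemma hasDerivAt_Q (x : ℝ) :
    HasDerivAt (fun x : ℝ => (Nm r G C x).det) (Q1 r G C x) x := by
  have : (fun x : ℝ => (Nm r G C x).det) = fun x : ℝ =>
      ∑ σ : Equiv.Perm (Fin n), ((Equiv.Perm.sign σ : ℤ) : ℂ) * ∏ i, Nm r G C x (σ i) i := by
    funext y; rw [Matrix.det_apply']
  rw [this]
  refine HasDerivAt.fun_sum fun σ _ => ?_
  refine HasDerivAt.const_mul _ ?_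
  have := HasDerivAt.fun_finsetProd (u := univ)
    (f := fun i (x : ℝ) => Nm r G C x (σ i) i)
    (f' := fun i => ent' G C x (σ i) i)
    (fun i _ => hasDerivAt_entry r G C x (σ i) i)
  simpa [smul_eq_mul] using this

lemma hasDerivAt_Q1 (x : ℝ) :
    HasDerivAt (Q1 r G C) (Q2 r G C x) x := by
  refine HasDerivAt.fun_sum fun σ _ => ?_
  refine HasDerivAt.const_mul _ ?_
  refine HasDerivAt.fun_sum fun i _ => ?_
  have hprod := HasDerivAt.fun_finsetProd (u := univ.erase i)
    (f := fun j (x : ℝ) => Nm r G C x (σ j) j)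
    (f' := fun j => ent' G C x (σ j) j)
    (fun j _ => hasDerivAt_entry r G C x (σ j) j)
  have := hprod.fun_mul (hasDerivAt_ent' G C x (σ i) i)
  simpa [smul_eq_mul] using this

lemma exists_ne_of_ne_one {m : ℕ} {σ : Equiv.Perm (Fin m)} (h : σ ≠ 1) (i : Fin m) :
    ∃ j, j ≠ i ∧ σ j ≠ j := by
  have : ∃ a, σ a ≠ a := by
    by_contra hc
    push_neg at hc
    exact h (Equiv.ext fun a => hc a)
  obtain ⟨a, ha⟩ := this
  by_cases hai : a = i
  · refine ⟨σ a, ?_, ?_⟩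
    · rw [hai] at ha ⊢; exact ha
    · intro hb
      exact ha (σ.injective (by rw [hb]))
  · exact ⟨a, hai, ha⟩

lemma perm_classify {m : ℕ} (σ : Equiv.Perm (Fin m)) (i k : Fin m) (hik : k ≠ i)
    (hfix : ∀ j, j ≠ i → j ≠ k → σ j = j) : σ = 1 ∨ σ = Equiv.swap i k := by
  have hmem : ∀ a : Fin m, σ a ≠ a → (σ a = i ∨ σ a = k) := by
    intro a _
    by_contra hc
    push_neg at hc
    have := hfix (σ a) hc.1 hc.2
    have := σ.injective this
    simp_all
  by_cases h1 : σ i = i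
  · left
    have hk : σ k = k := by
      by_contra hkk
      rcases hmem k hkk with h | h
      · exact hik (σ.injective (h.trans h1.symm))
      · exact hkk h
    refine Equiv.ext fun j => ?_
    by_cases hji : j = i
    · rw [hji]; simpa using h1
    · by_cases hjk : j = k
      · rw [hjk]; simpa using hk
      · simpa using hfix j hji hjk
  · right
    have hi : σ i = k := by
      rcases hmem i h1 with h | h
      · exact absurd h h1
      · exact h
    have hk : σ k = i := by
      have hkk : σ k ≠ k := by
        intro hc
        exact hik (σ.injective (hc.trans hi.symm))
      rcases hmem k hkk with h | h
      · exact h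
      · exact absurd h hkk
    refine Equiv.ext fun j => ?_
    by_cases hji : j = i
    · rw [hji, Equiv.swap_apply_left]; exact hi
    · by_cases hjk : j = k
      · rw [hjk, Equiv.swap_apply_right]; exact hk
      · rw [Equiv.swap_apply_of_ne_of_ne hji hjk]; exact hfix j hji hjk

lemma Nm_zero : Nm r G C 0 = Matrix.diagonal (fun i => (r i : ℂ)) := by
  simp [Nm]

lemma prod_erase_diag (σ : Equiv.Perm (Fin n)) (i : Fin n) :
    (∏ j ∈ univ.erase i, Nm r G C 0 (σ j) j) =
      if σ = 1 then (∏ j ∈ univ.erase i, (r j : ℂ)) else 0 := by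
  rw [Nm_zero]
  split_ifs with h
  · subst h; simp [Matrix.diagonal_apply_eq]
  · obtain ⟨j₀, hji, hj⟩ := exists_ne_of_ne_one h i
    refine Finset.prod_eq_zero (Finset.mem_erase.mpr ⟨hji, Finset.mem_univ _⟩) ?_
    exact Matrix.diagonal_apply_ne _ hj

lemma prod_erase2_diag (σ : Equiv.Perm (Fin n)) (i k : Fin n) (hik : k ≠ i) :
    (∏ j ∈ (univ.erase i).erase k, Nm r G C 0 (σ j) j) =
      if σ = 1 ∨ σ = Equiv.swap i k then (∏ j ∈ (univ.erase i).erase k, (r j : ℂ)) else 0 := by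
  rw [Nm_zero]
  by_cases hfix : ∀ j, j ≠ i → j ≠ k → σ j = j
  · rw [if_pos (perm_classify σ i k hik hfix)]
    refine Finset.prod_congr rfl fun j hj => ?_
    rw [Finset.mem_erase, Finset.mem_erase] at hj
    rw [hfix j hj.2.1 hj.1, Matrix.diagonal_apply_eq]
  · push_neg at hfix
    obtain ⟨j₀, hji, hjk, hj⟩ := hfix
    rw [if_neg]
    · refine Finset.prod_eq_zero (Finset.mem_erase.mpr ⟨hjk, Finset.mem_erase.mpr ⟨hji, Finset.mem_univ _⟩⟩) ?_
      exact Matrix.diagonal_apply_ne _ hj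
    · rintro (rfl | rfl)
      · exact hj rfl
      · exact hj (Equiv.swap_apply_of_ne_of_ne hji hjk)

lemma Q1_zero :
    Q1 r G C 0 = -∑ i, (∏ j ∈ univ.erase i, (r j : ℂ)) * G i i := by
  unfold Q1
  have : ∀ σ : Equiv.Perm (Fin n), ((Equiv.Perm.sign σ : ℤ) : ℂ) *
      ∑ i, (∏ j ∈ univ.erase i, Nm r G C 0 (σ j) j) * ent' G C 0 (σ i) i =
      if σ = 1 then -∑ i, (∏ j ∈ univ.erase i, (r j : ℂ)) * G i i else 0 := by
    intro σ
    split_ifs with h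
    · subst h
      simp [Nm_zero, Matrix.diagonal_apply_eq, ent', Finset.mul_sum, mul_comm, neg_mul, mul_neg,
        Finset.sum_neg_distrib]
    · simp [prod_erase_diag, h]
  rw [Finset.sum_congr rfl fun σ _ => this σ]
  simp

lemma sum_perm_pair (i k : Fin n) (hki : k ≠ i) :
    ∑ σ : Equiv.Perm (Fin n), ((Equiv.Perm.sign σ : ℤ) : ℂ) *
      ((∏ j ∈ (univ.erase i).erase k, Nm r G C 0 (σ j) j) * (-(G (σ k) k)) * (-(G (σ i) i)))
    = (∏ j ∈ (univ.erase i).erase k, (r j : ℂ)) * (G i i * G k k - G i k * G k i) := by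
  have hone : (1 : Equiv.Perm (Fin n)) ∉ ({Equiv.swap i k} : Finset (Equiv.Perm (Fin n))) := by
    simp only [Finset.mem_singleton]
    intro h
    have h2 : Equiv.swap i k i = i := by rw [← h]; rfl
    rw [Equiv.swap_apply_left] at h2
    exact hki h2
  have hvanish : ∀ σ ∈ (univ : Finset (Equiv.Perm (Fin n))),
      σ ∉ ({1, Equiv.swap i k} : Finset (Equiv.Perm (Fin n))) →
      ((Equiv.Perm.sign σ : ℤ) : ℂ) *
        ((∏ j ∈ (univ.erase i).erase k, Nm r G C 0 (σ j) j) * (-(G (σ k) k)) * (-(G (σ i) i))) = 0 := by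
    intro σ _ hσ
    rw [Finset.mem_insert, Finset.mem_singleton] at hσ
    rw [prod_erase2_diag r G C σ i k hki, if_neg hσ]
    ring
  rw [← Finset.sum_subset (Finset.subset_univ ({1, Equiv.swap i k} : Finset (Equiv.Perm (Fin n)))) hvanish]
  rw [Finset.sum_insert hone, Finset.sum_singleton]
  rw [prod_erase2_diag r G C 1 i k hki, if_pos (Or.inl rfl)]
  rw [prod_erase2_diag r G C (Equiv.swap i k) i k hki, if_pos (Or.inr rfl)]
  have hsw : Equiv.swap i k k = i := Equiv.swap_apply_right i k
  have hsw' : Equiv.swap i k i = k := Equiv.swap_apply_left i k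
  have hsgn : Equiv.Perm.sign (Equiv.swap i k) = -1 := Equiv.Perm.sign_swap (fun h => hki h.symm)
  rw [hsw, hsw', hsgn]
  simp only [Equiv.Perm.sign_one, Equiv.Perm.one_apply, Units.val_one, Int.cast_one,
    Units.val_neg, Int.cast_neg]
  ring

lemma Q2_zero :
    Q2 r G C 0 =
      (∑ i, ∑ k ∈ univ.erase i, (∏ j ∈ (univ.erase i).erase k, (r j : ℂ)) *
        (G i i * G k k - G i k * G k i))
      - 2 * ∑ i, (∏ j ∈ univ.erase i, (r j : ℂ)) * C i i := by
  unfold Q2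
  have hent : ∀ a b : Fin n, ent' G C 0 a b = -(G a b) := by
    intro a b; simp [ent']
  simp only [hent]
  have step1 : ∀ σ : Equiv.Perm (Fin n), ((Equiv.Perm.sign σ : ℤ) : ℂ) *
      ∑ i, ((∑ k ∈ univ.erase i, (∏ j ∈ (univ.erase i).erase k, Nm r G C 0 (σ j) j) *
              (-(G (σ k) k))) * (-(G (σ i) i))
          + (∏ j ∈ univ.erase i, Nm r G C 0 (σ j) j) * (-(2:ℂ) * C (σ i) i))
    = (∑ i, ∑ k ∈ univ.erase i, ((Equiv.Perm.sign σ : ℤ) : ℂ) *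
        ((∏ j ∈ (univ.erase i).erase k, Nm r G C 0 (σ j) j) * (-(G (σ k) k)) * (-(G (σ i) i))))
      + ((Equiv.Perm.sign σ : ℤ) : ℂ) *
        ∑ i, (∏ j ∈ univ.erase i, Nm r G C 0 (σ j) j) * (-(2:ℂ) * C (σ i) i) := by
    intro σ
    rw [Finset.mul_sum]
    simp only [mul_add]
    rw [Finset.sum_add_distrib]
    congr 1
    · refine Finset.sum_congr rfl fun i _ => ?_
      rw [Finset.sum_mul, Finset.mul_sum]
    all_goals try rw [Finset.mul_sum]
  rw [Finset.sum_congr rfl fun σ _ => step1 σ]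
  rw [Finset.sum_add_distrib, sub_eq_add_neg]
  congr 1
  · -- the A part
    rw [Finset.sum_comm]
    refine Finset.sum_congr rfl fun i _ => ?_
    rw [Finset.sum_comm]
    refine Finset.sum_congr rfl fun k hk => ?_
    exact sum_perm_pair r G C i k (Finset.mem_erase.mp hk).1
  · -- the B part
    have : ∀ σ : Equiv.Perm (Fin n), ((Equiv.Perm.sign σ : ℤ) : ℂ) *
        ∑ i, (∏ j ∈ univ.erase i, Nm r G C 0 (σ j) j) * (-(2:ℂ) * C (σ i) i)
      = if σ = 1 then -(2 * ∑ i, (∏ j ∈ univ.erase i, (r j : ℂ)) * C i i) else 0 := by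
      intro σ
      split_ifs with h
      · subst h
        simp only [Equiv.Perm.sign_one, Units.val_one, Int.cast_one, one_mul,
          Equiv.Perm.one_apply, Nm_zero, Matrix.diagonal_apply_eq]
        rw [Finset.mul_sum, ← Finset.sum_neg_distrib]
        refine Finset.sum_congr rfl fun i _ => ?_
        ring
      · have : ∀ i : Fin n, (∏ j ∈ univ.erase i, Nm r G C 0 (σ j) j) = 0 := by
          intro i
          rw [prod_erase_diag r G C σ i, if_neg h]
        simp [this]
    rw [Finset.sum_congr rfl fun σ _ => this σ]
    simp

lemma hasDerivAt_P (x : ℝ) :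
    HasDerivAt (fun x : ℝ => ((Nm r G C x).det).re) ((Q1 r G C x).re) x :=
  Complex.reCLM.hasFDerivAt.comp_hasDerivAt x (hasDerivAt_Q r G C x)

lemma hasDerivAt_P1 (x : ℝ) :
    HasDerivAt (fun x : ℝ => (Q1 r G C x).re) ((Q2 r G C x).re) x :=
  Complex.reCLM.hasFDerivAt.comp_hasDerivAt x (hasDerivAt_Q1 r G C x)

lemma key_iteratedDeriv (hP0 : 0 < ((Nm r G C 0).det).re) :
    iteratedDeriv 2 (fun x : ℝ => -Real.log (((Nm r G C x).det).re)) 0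
    = ((Q1 r G C 0).re)^2 / (((Nm r G C 0).det).re)^2
      - (Q2 r G C 0).re / ((Nm r G C 0).det).re := by
  have hP : ∀ x : ℝ, HasDerivAt (fun x : ℝ => ((Nm r G C x).det).re) ((Q1 r G C x).re) x :=
    hasDerivAt_P r G C
  have hc : ContinuousAt (fun x : ℝ => ((Nm r G C x).det).re) 0 := (hP 0).continuousAt
  have hev : ∀ᶠ x in nhds (0:ℝ), 0 < ((Nm r G C x).det).re := hc (Ioi_mem_nhds hP0)
  have hderiv_eq : ∀ᶠ x in nhds (0:ℝ),
      deriv (fun x : ℝ => -Real.log (((Nm r G C x).det).re)) x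
        = -((Q1 r G C x).re / ((Nm r G C x).det).re) := by
    filter_upwards [hev] with x hx
    have hlog := (Real.hasDerivAt_log hx.ne').comp x (hP x)
    have hlog' : HasDerivAt (fun x : ℝ => -Real.log (((Nm r G C x).det).re))
        (-((Q1 r G C x).re / ((Nm r G C x).det).re)) x := by
      have := hlog.fun_neg
      simp only [Function.comp] at this
      rw [div_eq_inv_mul]
      exact this
    exact hlog'.deriv
  rw [show (2:ℕ) = 1 + 1 from rfl, iteratedDeriv_succ, iteratedDeriv_one]
  rw [Filter.EventuallyEq.deriv_eq hderiv_eq]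
  have hdiv := ((hasDerivAt_P1 r G C 0).fun_div (hP 0) hP0.ne').fun_neg
  rw [hdiv.deriv]
  field_simp
  ring

lemma Q1_re (G C : Matrix (Fin n) (Fin n) ℂ) :
    (Q1 r G C 0).re = -∑ i, (∏ j ∈ univ.erase i, r j) * (G i i).re := by
  rw [Q1_zero, Complex.neg_re, Complex.re_sum]
  congr 1
  refine Finset.sum_congr rfl fun i _ => ?_
  rw [← Complex.ofReal_prod, Complex.re_ofReal_mul]

lemma Q2_re (G C : Matrix (Fin n) (Fin n) ℂ) :
    (Q2 r G C 0).re
    = ∑ i, ∑ k ∈ univ.erase i, (∏ j ∈ (univ.erase i).erase k, r j)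
        * ((G i i * G k k - G i k * G k i).re)
      - 2 * ∑ i, (∏ j ∈ univ.erase i, r j) * (C i i).re := by
  rw [Q2_zero, Complex.sub_re, Complex.re_sum]
  congr 1
  · refine Finset.sum_congr rfl fun i _ => ?_
    rw [Complex.re_sum]
    refine Finset.sum_congr rfl fun k _ => ?_
    rw [← Complex.ofReal_prod, Complex.re_ofReal_mul]
  · have : ((2 : ℂ) * ∑ i, (∏ j ∈ univ.erase i, ((r j : ℝ) : ℂ)) * C i i).re
        = 2 * (∑ i, (∏ j ∈ univ.erase i, ((r j : ℝ) : ℂ)) * C i i).re := by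
      rw [show ((2:ℂ)) = ((2:ℝ):ℂ) by norm_num, Complex.re_ofReal_mul]
    rw [this, Complex.re_sum]
    congr 1
    refine Finset.sum_congr rfl fun i _ => ?_
    rw [← Complex.ofReal_prod, Complex.re_ofReal_mul]

lemma Nm_zero_det_re : ((Nm r G C 0).det).re = ∏ i, r i := by
  rw [Nm_zero, Matrix.det_diagonal, ← Complex.ofReal_prod, Complex.ofReal_re]

lemma real_endgame {m : ℕ} (r : Fin m → ℝ) (hr0 : ∀ i, 0 < r i) (hr1 : ∀ i, r i ≤ 1)
    (cre cim : Fin m → ℝ) (nq : Fin m → Fin m → ℝ) (hnq : ∀ i k, 0 ≤ nq i k)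
    (tc : Fin m → ℝ) (htc : ∀ i, 0 ≤ tc i) :
    4 * ∑ i, tc i ≤
      ((∑ i, (∏ j ∈ univ.erase i, r j) * (2*cre i))^2
        + (∑ i, (∏ j ∈ univ.erase i, r j) * (-2*cim i))^2) / (∏ j, r j)^2
      - (∑ i, ∑ k ∈ univ.erase i, (∏ j ∈ (univ.erase i).erase k, r j)
           * (4*(cre i*cre k + cim i*cim k) - 2*nq i k - 2*nq k i)
         - 4 * ∑ i, (∏ j ∈ univ.erase i, r j) * tc i) / (∏ j, r j) := by
  set π : Fin m → ℝ := fun i => ∏ j ∈ univ.erase i, r j with hπ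
  set ρ : Fin m → Fin m → ℝ := fun i k => ∏ j ∈ (univ.erase i).erase k, r j with hρ
  set P0 : ℝ := ∏ j, r j with hP0
  have hP0pos : 0 < P0 := Finset.prod_pos fun j _ => hr0 j
  have hπpos : ∀ i, 0 < π i := fun i => Finset.prod_pos fun j _ => hr0 j
  have hρpos : ∀ i k, 0 < ρ i k := fun i k => Finset.prod_pos fun j _ => hr0 j
  have hπP0 : ∀ i, π i * r i = P0 := fun i =>
    Finset.prod_erase_mul univ r (Finset.mem_univ i)
  have hππ : ∀ i k, k ∈ univ.erase i → π i * π k = P0 * ρ i k := by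
    intro i k hk
    have hki : k ≠ i := (Finset.mem_erase.mp hk).1
    have e1 : ρ i k * r k = π i := Finset.prod_erase_mul _ r hk
    have e2 : ρ i k * r i = π k := by
      have hset : ρ i k = ∏ j ∈ (univ.erase k).erase i, r j := by
        simp only [hρ]
        rw [Finset.erase_right_comm]
      rw [hset]
      exact Finset.prod_erase_mul _ r
        (Finset.mem_erase.mpr ⟨fun h => hki h.symm, Finset.mem_univ i⟩)
    rw [← e1, ← e2, ← hπP0 i, ← e1]
    ring
  set c : Fin m → Fin m → ℝ := fun i k => 4*(cre i * cre k + cim i * cim k) with hc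
  -- squares as double sums
  have hsq : (∑ i, π i * (2*cre i))^2 + (∑ i, π i * (-2*cim i))^2
      = ∑ i, ∑ k, π i * π k * c i k := by
    rw [sq, sq, Finset.sum_mul_sum, Finset.sum_mul_sum, ← Finset.sum_add_distrib]
    refine Finset.sum_congr rfl fun i _ => ?_
    rw [← Finset.sum_add_distrib]
    refine Finset.sum_congr rfl fun k _ => ?_
    simp only [hc]; ring
  -- split double sum
  have hsplit : ∑ i, ∑ k, π i * π k * c i k
      = ∑ i, π i ^ 2 * c i i + P0 * ∑ i, ∑ k ∈ univ.erase i, ρ i k * c i k := by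
    rw [Finset.mul_sum, ← Finset.sum_add_distrib]
    refine Finset.sum_congr rfl fun i _ => ?_
    rw [← Finset.add_sum_erase _ _ (Finset.mem_univ i), Finset.mul_sum]
    congr 1
    · ring
    · refine Finset.sum_congr rfl fun k hk => ?_
      rw [show π i * π k * c i k = (π i * π k) * c i k from rfl, hππ i k hk]
      ring
  -- split the S sum
  have hS : ∑ i, ∑ k ∈ univ.erase i, ρ i k * (c i k - 2*nq i k - 2*nq k i)
      = (∑ i, ∑ k ∈ univ.erase i, ρ i k * c i k)
        - ∑ i, ∑ k ∈ univ.erase i, ρ i k * (2*nq i k + 2*nq k i) := by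
    rw [← Finset.sum_sub_distrib]
    refine Finset.sum_congr rfl fun i _ => ?_
    rw [← Finset.sum_sub_distrib]
    exact Finset.sum_congr rfl fun k _ => by ring
  have hrw : ∀ i k, 4*(cre i*cre k + cim i*cim k) - 2*nq i k - 2*nq k i
      = c i k - 2*nq i k - 2*nq k i := fun i k => by rw [hc]
  simp only [hrw]
  rw [hsq, hsplit, hS]
  have hSc : 0 ≤ ∑ i, ∑ k ∈ univ.erase i, ρ i k * (2*nq i k + 2*nq k i) := by
    refine Finset.sum_nonneg fun i _ => Finset.sum_nonneg fun k _ => ?_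
    have h1 := hnq i k; have h2 := hnq k i
    have := (hρpos i k).le
    nlinarith
  have hS1 : 0 ≤ ∑ i, π i ^ 2 * c i i := by
    refine Finset.sum_nonneg fun i _ => ?_
    have : 0 ≤ c i i := by simp only [hc]; nlinarith [sq_nonneg (cre i), sq_nonneg (cim i)]
    positivity
  have e : (∑ i, π i ^ 2 * c i i + P0 * ∑ i, ∑ k ∈ univ.erase i, ρ i k * c i k)/P0^2
      - ((∑ i, ∑ k ∈ univ.erase i, ρ i k * c i k
          - ∑ i, ∑ k ∈ univ.erase i, ρ i k * (2*nq i k + 2*nq k i))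
         - 4 * ∑ i, π i * tc i)/P0
      = (∑ i, π i ^ 2 * c i i)/P0^2
        + (∑ i, ∑ k ∈ univ.erase i, ρ i k * (2*nq i k + 2*nq k i))/P0
        + (4 * ∑ i, π i * tc i)/P0 := by
    field_simp
    ring
  rw [e]
  have h1 : 0 ≤ (∑ i, π i ^ 2 * c i i)/P0^2 := div_nonneg hS1 (sq_nonneg _)
  have h2 : 0 ≤ (∑ i, ∑ k ∈ univ.erase i, ρ i k * (2*nq i k + 2*nq k i))/P0 :=
    div_nonneg hSc hP0pos.le
  have h3 : 4 * ∑ i, tc i ≤ (4 * ∑ i, π i * tc i)/P0 := by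
    rw [le_div_iff₀ hP0pos]
    have hsum : ∑ i, tc i * P0 ≤ ∑ i, π i * tc i := by
      refine Finset.sum_le_sum fun i _ => ?_
      have hπge : P0 ≤ π i := by
        have := hπP0 i
        nlinarith [hπpos i, hr1 i, hr0 i]
      calc tc i * P0 = P0 * tc i := by ring
        _ ≤ π i * tc i := mul_le_mul_of_nonneg_right hπge (htc i)
    calc 4 * (∑ i, tc i) * P0 = 4 * ∑ i, tc i * P0 := by rw [mul_assoc, Finset.sum_mul]
      _ ≤ 4 * ∑ i, π i * tc i := by linarith
  linarith

lemma cplx_diag1 (a : ℂ) : (a + star a).re = 2 * a.re := by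
  simp [Complex.star_def, Complex.add_re]; ring

lemma cplx_diag2 (a : ℂ) :
    (Complex.I * a - Complex.I * star a).re = -2 * a.im := by
  simp [Complex.star_def, Complex.sub_re, Complex.mul_re]; ring

lemma cplx_id (a b c d : ℂ) :
    ((a + star a) * (b + star b)
      - (c + star d) * (d + star c)).re
    + ((Complex.I * a - Complex.I * star a)
        * (Complex.I * b - Complex.I * star b)
      - (Complex.I * c - Complex.I * star d)
        * (Complex.I * d - Complex.I * star c)).re
    = 4*(a.re*b.re + a.im*b.im) - 2*Complex.normSq c - 2*Complex.normSq d := by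
  simp [Complex.star_def, Complex.sub_re, Complex.add_re, Complex.add_im, Complex.sub_im,
    Complex.mul_re, Complex.mul_im, Complex.normSq_apply]
  ring

section main
variable {p q : ℕ} (hpq : p ≤ q) (w₀ X : Matrix (Fin p) (Fin q) ℂ)

lemma expand_matrix (t : ℂ) :
    (1 : Matrix (Fin p) (Fin p) ℂ) - (w₀ + t • X) * (w₀ + t • X)ᴴ
    = (1 - w₀ * w₀ᴴ) - t • (X * w₀ᴴ) - (star t) • (w₀ * Xᴴ)
      - (t * star t) • (X * Xᴴ) := by
  rw [conjTranspose_add, conjTranspose_smul]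
  rw [Matrix.add_mul, Matrix.mul_add, Matrix.mul_add]
  rw [Matrix.smul_mul, Matrix.smul_mul, Matrix.mul_smul, Matrix.mul_smul, smul_smul]
  abel

lemma diag_rep (hdiag : ∀ (i : Fin p) (j : Fin q), (i : ℕ) ≠ (j : ℕ) → w₀ i j = 0) :
    (1 : Matrix (Fin p) (Fin p) ℂ) - w₀ * w₀ᴴ
    = Matrix.diagonal (fun i =>
        ((1 - Complex.normSq (w₀ i (Fin.castLE hpq i)) : ℝ) : ℂ)) := by
  ext i j
  have hsum : (w₀ * w₀ᴴ) i j
      = w₀ i (Fin.castLE hpq i) * star (w₀ j (Fin.castLE hpq i)) := by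
    rw [Matrix.mul_apply]
    refine Finset.sum_eq_single (Fin.castLE hpq i) (fun b _ hb => ?_) (by simp)
    have hbi : (i : ℕ) ≠ (b : ℕ) := by
      intro h
      exact hb (by ext; simp [← h])
    rw [hdiag i b hbi, zero_mul]
  by_cases hij : i = j
  · subst hij
    rw [Matrix.sub_apply, hsum, Matrix.diagonal_apply_eq, Matrix.one_apply_eq]
    rw [show star (w₀ i (Fin.castLE hpq i)) = (starRingEnd ℂ) (w₀ i (Fin.castLE hpq i)) from rfl,
      Complex.mul_conj]
    push_cast
    ring
  · rw [Matrix.sub_apply, hsum, Matrix.diagonal_apply_ne _ hij, Matrix.one_apply_ne hij]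
    have hji : (j : ℕ) ≠ ((Fin.castLE hpq i : Fin q) : ℕ) := by
      simp only [Fin.coe_castLE]
      exact fun h => hij (by ext; omega)
    rw [hdiag j _ hji]
    simp

lemma path_re (hdiag : ∀ (i : Fin p) (j : Fin q), (i : ℕ) ≠ (j : ℕ) → w₀ i j = 0) (x : ℝ) :
    (1 : Matrix (Fin p) (Fin p) ℂ) - (w₀ + (x:ℂ) • X) * (w₀ + (x:ℂ) • X)ᴴ
    = Nm (fun i => 1 - Complex.normSq (w₀ i (Fin.castLE hpq i)))
        ((X * w₀ᴴ) + (X * w₀ᴴ)ᴴ) (X * Xᴴ) x := by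
  rw [expand_matrix, diag_rep hpq w₀ hdiag]
  unfold Nm
  push_cast
  have h1 : star ((x:ℂ)) = (x:ℂ) := by
    simp [Complex.star_def, Complex.conj_ofReal]
  have h2 : w₀ * Xᴴ = (X * w₀ᴴ)ᴴ := by
    rw [conjTranspose_mul, conjTranspose_conjTranspose]
  rw [h1, h2, smul_add]
  have h3 : (x:ℂ) * (x:ℂ) = (x:ℂ)^2 := by ring
  rw [h3]
  abel

lemma path_im (hdiag : ∀ (i : Fin p) (j : Fin q), (i : ℕ) ≠ (j : ℕ) → w₀ i j = 0) (y : ℝ) :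
    (1 : Matrix (Fin p) (Fin p) ℂ) - (w₀ + ((y:ℂ) * Complex.I) • X) * (w₀ + ((y:ℂ) * Complex.I) • X)ᴴ
    = Nm (fun i => 1 - Complex.normSq (w₀ i (Fin.castLE hpq i)))
        (Complex.I • (X * w₀ᴴ) - Complex.I • (X * w₀ᴴ)ᴴ) (X * Xᴴ) y := by
  rw [expand_matrix, diag_rep hpq w₀ hdiag]
  unfold Nm
  push_cast
  have h1 : star ((y:ℂ)*Complex.I) = (y:ℂ) * (-Complex.I) := by
    simp [Complex.star_def, Complex.conj_ofReal]
  have h2 : w₀ * Xᴴ = (X * w₀ᴴ)ᴴ := by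
    rw [conjTranspose_mul, conjTranspose_conjTranspose]
  rw [h1, h2]
  have h3 : ((y:ℂ)*Complex.I) * ((y:ℂ) * (-Complex.I)) = (y:ℂ)^2 := by
    have h := Complex.I_mul_I
    calc (y:ℂ)*Complex.I * ((y:ℂ) * (-Complex.I))
        = -(Complex.I*Complex.I) * ((y:ℂ)*(y:ℂ)) := by ring
      _ = (y:ℂ)^2 := by rw [h]; ring
  rw [h3, smul_sub]
  rw [mul_smul, mul_smul]
  simp only [neg_smul, smul_neg]
  abel

end main

end AuxNLD

/-- At every diagonal point `w₀` of `D_{p,q}`, the complex Hessian of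
`u(W) = −log det(I − W Wᴴ)` dominates the Frobenius Hermitian form: for every direction
`X`, the Laplacian at `0` of `t ↦ u(w₀ + t X)` is at least `4 Σ_{i,j} |X_{ij}|²`. -/
theorem laplacian_negLogDet_ge_frobenius (p q : ℕ) (hp : 1 ≤ p) (hpq : p ≤ q)
    (w₀ : Matrix (Fin p) (Fin q) ℂ)
    (hdiag : ∀ (i : Fin p) (j : Fin q), (i : ℕ) ≠ (j : ℕ) → w₀ i j = 0)
    (hd : ∀ i : Fin p, ‖w₀ i (Fin.castLE hpq i)‖ < 1)
    (X : Matrix (Fin p) (Fin q) ℂ) :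
    4 * ∑ i, ∑ j, ‖X i j‖ ^ 2 ≤
      laplacianAt (fun t : ℂ => negLogDetI p q (w₀ + t • X)) := by
  classical
  set r : Fin p → ℝ := fun i => 1 - Complex.normSq (w₀ i (Fin.castLE hpq i)) with hr
  set B : Matrix (Fin p) (Fin p) ℂ := X * w₀ᴴ with hB
  set CC : Matrix (Fin p) (Fin p) ℂ := X * Xᴴ with hCC
  set G₁ : Matrix (Fin p) (Fin p) ℂ := B + Bᴴ with hG₁
  set G₂ : Matrix (Fin p) (Fin p) ℂ := Complex.I • B - Complex.I • Bᴴ with hG₂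
  have hr0 : ∀ i, 0 < r i := by
    intro i
    have h := hd i
    have h2 : Complex.normSq (w₀ i (Fin.castLE hpq i)) < 1 := by
      rw [← Complex.sq_norm]
      nlinarith [norm_nonneg (w₀ i (Fin.castLE hpq i))]
    simp only [hr]
    linarith
  have hr1 : ∀ i, r i ≤ 1 := by
    intro i
    have := Complex.normSq_nonneg (w₀ i (Fin.castLE hpq i))
    simp only [hr]
    linarith
  have hP0pos : 0 < ∏ i, r i := Finset.prod_pos fun i _ => hr0 i
  have hNm1 : 0 < ((Nm r G₁ CC 0).det).re := by rw [Nm_zero_det_re]; exact hP0pos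
  have hNm2 : 0 < ((Nm r G₂ CC 0).det).re := by rw [Nm_zero_det_re]; exact hP0pos
  have hfun1 : (fun x : ℝ => negLogDetI p q (w₀ + ((x : ℂ)) • X))
      = fun x : ℝ => -Real.log (((Nm r G₁ CC x).det).re) := by
    funext x
    rw [negLogDetI, path_re hpq w₀ X hdiag x]
  have hfun2 : (fun y : ℝ => negLogDetI p q (w₀ + ((y : ℂ) * Complex.I) • X))
      = fun y : ℝ => -Real.log (((Nm r G₂ CC y).det).re) := by
    funext y
    rw [negLogDetI, path_im hpq w₀ X hdiag y]
  rw [laplacianAt]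
  rw [show (fun x : ℝ => (fun t : ℂ => negLogDetI p q (w₀ + t • X)) ((x : ℂ)))
      = fun x : ℝ => negLogDetI p q (w₀ + ((x : ℂ)) • X) from rfl]
  rw [show (fun y : ℝ => (fun t : ℂ => negLogDetI p q (w₀ + t • X)) ((y : ℂ) * Complex.I))
      = fun y : ℝ => negLogDetI p q (w₀ + ((y : ℂ) * Complex.I) • X) from rfl]
  rw [hfun1, hfun2]
  rw [key_iteratedDeriv r G₁ CC hNm1, key_iteratedDeriv r G₂ CC hNm2]
  rw [Q1_re, Q1_re, Q2_re, Q2_re, Nm_zero_det_re, Nm_zero_det_re]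
  -- entry computations
  have hG1e : ∀ i k, G₁ i k = B i k + star (B k i) := by
    intro i k
    simp [hG₁, Matrix.add_apply, Matrix.conjTranspose_apply]
  have hG2e : ∀ i k, G₂ i k = Complex.I * B i k - Complex.I * star (B k i) := by
    intro i k
    simp [hG₂, Matrix.sub_apply, Matrix.smul_apply, Matrix.conjTranspose_apply, smul_eq_mul]
  have hCe : ∀ i, (CC i i).re = ∑ j, Complex.normSq (X i j) := by
    intro i
    rw [hCC, Matrix.mul_apply]
    rw [Complex.re_sum]
    refine Finset.sum_congr rfl fun j _ => ?_
    rw [Matrix.conjTranspose_apply, show star (X i j) = (starRingEnd ℂ) (X i j) from rfl,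
      Complex.mul_conj, Complex.ofReal_re]
  -- abbreviations
  set π : Fin p → ℝ := fun i => ∏ j ∈ Finset.univ.erase i, r j with hπ
  set ρ : Fin p → Fin p → ℝ := fun i k => ∏ j ∈ (Finset.univ.erase i).erase k, r j with hρ
  set cre : Fin p → ℝ := fun i => (B i i).re with hcre
  set cim : Fin p → ℝ := fun i => (B i i).im with hcim
  set nq : Fin p → Fin p → ℝ := fun i k => Complex.normSq (B i k) with hnq
  set tc : Fin p → ℝ := fun i => ∑ j, Complex.normSq (X i j) with htc
  have hA1 : ∀ i, (G₁ i i).re = 2 * cre i := fun i => by rw [hG1e i i]; exact cplx_diag1 _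
  have hA2 : ∀ i, (G₂ i i).re = -2 * cim i := fun i => by rw [hG2e i i]; exact cplx_diag2 _
  have hLHS : 4 * ∑ i, ∑ j, ‖X i j‖ ^ 2 = 4 * ∑ i, tc i := by
    congr 1
    refine Finset.sum_congr rfl fun i _ => ?_
    simp only [htc]
    exact Finset.sum_congr rfl fun j _ => Complex.sq_norm _
  rw [hLHS]
  -- combine the two Q2 real parts pointwise later; final comparison with real_endgame
  have hmain := real_endgame r hr0 hr1 cre cim nq (fun i k => Complex.normSq_nonneg _)
      tc (fun i => Finset.sum_nonneg fun j _ => Complex.normSq_nonneg _)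
  refine le_trans hmain (le_of_eq ?_)
  -- identify the two sides
  have hScomb : ∑ i, ∑ k ∈ Finset.univ.erase i, ρ i k
        * (4*(cre i * cre k + cim i * cim k) - 2 * nq i k - 2 * nq k i)
      = (∑ i, ∑ k ∈ Finset.univ.erase i, ρ i k * ((G₁ i i * G₁ k k - G₁ i k * G₁ k i).re))
        + ∑ i, ∑ k ∈ Finset.univ.erase i, ρ i k * ((G₂ i i * G₂ k k - G₂ i k * G₂ k i).re) := by
    rw [← Finset.sum_add_distrib]
    refine Finset.sum_congr rfl fun i _ => ?_
    rw [← Finset.sum_add_distrib]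
    refine Finset.sum_congr rfl fun k _ => ?_
    rw [← mul_add]
    congr 1
    rw [hG1e, hG1e, hG1e, hG1e, hG2e, hG2e, hG2e, hG2e]
    rw [cplx_id (B i i) (B k k) (B i k) (B k i)]
  have hQ1sq : ∀ (s : Fin p → ℝ), (-∑ i, π i * s i) ^ 2 = (∑ i, π i * s i) ^ 2 :=
    fun s => neg_sq _
  have e1 : (-∑ i, π i * (G₁ i i).re) ^ 2 = (∑ i, π i * (2 * cre i))^2 := by
    rw [neg_sq]
    congr 1
    exact Finset.sum_congr rfl fun i _ => by rw [hA1]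
  have e2 : (-∑ i, π i * (G₂ i i).re) ^ 2 = (∑ i, π i * (-2 * cim i))^2 := by
    rw [neg_sq]
    congr 1
    exact Finset.sum_congr rfl fun i _ => by rw [hA2]
  have e3 : ∀ g : Fin p → ℝ, (∑ i, π i * (CC i i).re) = ∑ i, π i * tc i := by
    intro g
    exact Finset.sum_congr rfl fun i _ => by rw [hCe i]
  rw [hScomb, e1, e2, e3 (fun _ => 0)]
  ring
end
end

section
/- Let 1 ≤ p ≤ q be integers and let w₁, …, w_p be complex numbers with |w_i| < 1 for all i. Then for all matrices A, B, Y ∈ M_{p×q}(ℂ): Σ_{i=1}^p Σ_{j=1}^q ( |A_{ij}|² + |B_{ij}|² − 2 Re(A_{ij} · conj(Y_{ij})) + |Y_{ij}|²/(1 − |w_i|²) ) − 2 Re( Σ_{i=1}^p Σ_{j=1}^p w_i w_j B_{ij} · conj(A_{ji}) ) ≥ 0. (This is the key algebraic inequality establishing plurisubharmonicity of the pullback log ψ(h(ξ), w) under a pluriharmonic section h in the type I case of the main theorem; it admits the sum-of-squares decomposition Σ_{i,j≤p}(|w_i B_{ij} − conj(w_j) A_{ji}|² + (1−|w_i|²)|B_{ij}|²)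 + Σ_{i≤p, p<j≤q}(|B_{ij}|² + |w_i|²|A_{ij}|²) + Σ_{i≤p, j≤q} |√(1−|w_i|²) A_{ij} − Y_{ij}/√(1−|w_i|²)|².) -/
open scoped ComplexConjugate

noncomputable section

private lemma amgm_div (x y t : ℝ) (h1 : t < 1) :
    2 * (x * y) ≤ (1 - t) * x ^ 2 + y ^ 2 / (1 - t) := by
  have h : 0 < 1 - t := by linarith
  rw [div_eq_mul_inv]
  have hinv : (1 - t) * (1 - t)⁻¹ = 1 := mul_inv_cancel₀ h.ne'
  nlinarith [mul_nonneg (sq_nonneg ((1 - t) * x - y)) (inv_pos.2 h).le, hinv,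
    sq_nonneg ((1 - t) * x - y)]

private lemma re_le_abs_mul (a y : ℂ) :
    (a * conj y).re ≤ ‖a‖ * ‖y‖ := by
  calc (a * conj y).re ≤ ‖a * conj y‖ := Complex.re_le_norm _
    _ = ‖a‖ * ‖y‖ := by simp [map_mul]

private lemma sum_castLE_le {p q : ℕ} (h : p ≤ q) (f : Fin q → ℝ) (hf : ∀ j, 0 ≤ f j) :
    ∑ j : Fin p, f (Fin.castLE h j) ≤ ∑ j : Fin q, f j := by
  have h1 : ∑ j : Fin p, f (Fin.castLE h j)
      = ∑ j ∈ Finset.univ.image (Fin.castLE h), f j :=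
    (Finset.sum_image (fun a _ b _ hab => Fin.castLE_injective h hab)).symm
  rw [h1]
  exact Finset.sum_le_sum_of_subset_of_nonneg (Finset.subset_univ _) (fun i _ _ => hf i)

/-- The key algebraic inequality (type I case of the main theorem): for `|w_i| < 1` and
matrices `A, B, Y ∈ M_{p×q}(ℂ)`,
`Σ_{i,j} (|A_{ij}|² + |B_{ij}|² − 2 Re(A_{ij} conj(Y_{ij})) + |Y_{ij}|²/(1−|w_i|²))`
`− 2 Re Σ_{i,j ≤ p} w_i w_j B_{ij} conj(A_{ji}) ≥ 0`. -/
theorem key_inequality_typeI_mainthm (p q : ℕ) (hp : 1 ≤ p) (hpq : p ≤ q)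
    (w : Fin p → ℂ) (hw : ∀ i, ‖w i‖ < 1)
    (A B Y : Matrix (Fin p) (Fin q) ℂ) :
    0 ≤ (∑ i : Fin p, ∑ j : Fin q,
          (‖A i j‖ ^ 2 + ‖B i j‖ ^ 2
            - 2 * (A i j * conj (Y i j)).re
            + ‖Y i j‖ ^ 2 / (1 - ‖w i‖ ^ 2)))
        - 2 * (∑ i : Fin p, ∑ j : Fin p,
            w i * w j * B i (Fin.castLE hpq j) * conj (A j (Fin.castLE hpq i))).re := by
  set t : Fin p → ℝ := fun i => ‖w i‖ ^ 2 with ht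
  have ht0 : ∀ i, 0 ≤ t i := fun i => sq_nonneg _
  have ht1 : ∀ i, t i < 1 := fun i =>
    pow_lt_one₀ (norm_nonneg (w i)) (hw i) two_ne_zero
  -- Step A : bound the cross term
  have stepA : 2 * (∑ i : Fin p, ∑ j : Fin p,
      w i * w j * B i (Fin.castLE hpq j) * conj (A j (Fin.castLE hpq i))).re
      ≤ ∑ i : Fin p, ∑ j : Fin p,
        (t i * ‖B i (Fin.castLE hpq j)‖ ^ 2
          + t j * ‖A j (Fin.castLE hpq i)‖ ^ 2) := by
    rw [Complex.re_sum]
    rw [Finset.mul_sum]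
    apply Finset.sum_le_sum
    intro i _
    rw [Complex.re_sum, Finset.mul_sum]
    apply Finset.sum_le_sum
    intro j _
    have h1 := re_le_abs_mul (w i * w j * B i (Fin.castLE hpq j)) (A j (Fin.castLE hpq i))
    rw [norm_mul, norm_mul] at h1
    have h2 := sq_nonneg (‖w i‖ * ‖B i (Fin.castLE hpq j)‖
      - ‖w j‖ * ‖A j (Fin.castLE hpq i)‖)
    have h3 := norm_nonneg (w i)
    have h4 := norm_nonneg (w j)
    simp only [ht]
    nlinarith
  -- symmetrize
  have symm : ∑ i : Fin p, ∑ j : Fin p,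
        (t i * ‖B i (Fin.castLE hpq j)‖ ^ 2
          + t j * ‖A j (Fin.castLE hpq i)‖ ^ 2)
      = ∑ i : Fin p, ∑ j : Fin p,
        (t i * ‖B i (Fin.castLE hpq j)‖ ^ 2
          + t i * ‖A i (Fin.castLE hpq j)‖ ^ 2) := by
    simp only [Finset.sum_add_distrib]
    congr 1
    exact Finset.sum_comm
  -- Step B : extend the j-sum from Fin p to Fin q
  have stepB : ∑ i : Fin p, ∑ j : Fin p,
        (t i * ‖B i (Fin.castLE hpq j)‖ ^ 2
          + t i * ‖A i (Fin.castLE hpq j)‖ ^ 2)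
      ≤ ∑ i : Fin p, ∑ j : Fin q,
        (t i * ‖B i j‖ ^ 2 + t i * ‖A i j‖ ^ 2) := by
    apply Finset.sum_le_sum
    intro i _
    exact sum_castLE_le hpq
      (fun j => t i * ‖B i j‖ ^ 2 + t i * ‖A i j‖ ^ 2)
      (fun j => by positivity)
  -- Step C : entrywise inequality
  have stepC : ∑ i : Fin p, ∑ j : Fin q,
        (t i * ‖B i j‖ ^ 2 + t i * ‖A i j‖ ^ 2)
      ≤ ∑ i : Fin p, ∑ j : Fin q,
          (‖A i j‖ ^ 2 + ‖B i j‖ ^ 2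
            - 2 * (A i j * conj (Y i j)).re
            + ‖Y i j‖ ^ 2 / (1 - ‖w i‖ ^ 2)) := by
    apply Finset.sum_le_sum
    intro i _
    apply Finset.sum_le_sum
    intro j _
    have h1 := re_le_abs_mul (A i j) (Y i j)
    have h2 := amgm_div (‖A i j‖) (‖Y i j‖) (t i) (ht1 i)
    have h3 := ht0 i
    have h4 := ht1 i
    have h5 := sq_nonneg (‖B i j‖)
    simp only [ht] at *
    nlinarith
  linarith
end
end

section
/- Let 1 ≤ p ≤ q be integers, let r be a real number with r ≥ 2p, and let w₁, …, w_p be complex numbers with |w_i| < 1 for all i. Then for all matrices X, Y ∈ M_{p×q}(ℂ): Σ_{i=1}^p Σ_{j=1}^p ( |X_{ij}|² − 2 Re(X_{ij} · conj(Y_{ij})) + |Y_{ij}|²/((1 − |w_i|²)(1 − |w_j|²)) ) + Σ_{i=1}^p Σ_{j=p+1}^q ( |X_{ij}|² − 2 Re(X_{ij} · conj(Y_{ij})) + |Y_{ij}|²/(1 − |w_i|²) ) − (1/r) · | Σ_{i=1}^p ( conj(w_i) X_{ii} − conj(w_i) Y_{ii}/(1 − |w_i|²) ) |² ≥ 0.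 (This is the key inequality in the proof that −δ^{1/r} is a bounded plurisubharmonic exhaustion on the quotient Ω × Ω / Γ for the type I domain.) -/
open scoped ComplexConjugate

noncomputable section

/-- Per-term identity: `|x|² - 2Re(x conj y) + |y|²/c = |x-y|² + (1/c - 1)|y|²`. -/
lemma term_identity (x y : ℂ) (c : ℝ) (hc : 0 < c) :
    ‖x‖ ^ 2 - 2 * (x * conj y).re + ‖y‖ ^ 2 / c
      = ‖x - y‖ ^ 2 + (1 / c - 1) * ‖y‖ ^ 2 := by
  have h1 : ‖x - y‖ ^ 2 = Complex.normSq x + Complex.normSq y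
      - 2 * (x * conj y).re := by
    rw [Complex.sq_norm, Complex.normSq_sub]
  rw [h1, Complex.sq_norm, Complex.sq_norm]
  field_simp
  ring

/-- The key inequality in the proof that `−δ^{1/r}` is a bounded plurisubharmonic
exhaustion on `Ω × Ω / Γ` for the type I domain: for `r ≥ 2p`, `|w_i| < 1`, and
`X, Y ∈ M_{p×q}(ℂ)`,
`Σ_{i,j ≤ p} (|X_{ij}|² − 2Re(X_{ij} conj(Y_{ij})) + |Y_{ij}|²/((1−|w_i|²)(1−|w_j|²)))`
`+ Σ_{i ≤ p, p < j ≤ q} (|X_{ij}|² − 2Re(X_{ij} conj(Y_{ij})) + |Y_{ij}|²/(1−|w_i|²))`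
`− (1/r)|Σ_i (conj(w_i) X_{ii} − conj(w_i) Y_{ii}/(1−|w_i|²))|² ≥ 0`. -/
theorem key_inequality_hyperconvexity_typeI (p q : ℕ) (hp : 1 ≤ p) (hpq : p ≤ q)
    (r : ℝ) (hr : 2 * p ≤ r)
    (w : Fin p → ℂ) (hw : ∀ i, ‖w i‖ < 1)
    (X Y : Matrix (Fin p) (Fin q) ℂ) :
    0 ≤ (∑ i : Fin p, ∑ j : Fin p,
          (‖X i (Fin.castLE hpq j)‖ ^ 2
            - 2 * (X i (Fin.castLE hpq j) * conj (Y i (Fin.castLE hpq j))).re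
            + ‖Y i (Fin.castLE hpq j)‖ ^ 2 /
                ((1 - ‖w i‖ ^ 2) * (1 - ‖w j‖ ^ 2))))
        + (∑ i : Fin p, ∑ j ∈ Finset.univ.filter (fun j : Fin q => p ≤ (j : ℕ)),
          (‖X i j‖ ^ 2 - 2 * (X i j * conj (Y i j)).re
            + ‖Y i j‖ ^ 2 / (1 - ‖w i‖ ^ 2)))
        - (1 / r) *
          ‖∑ i : Fin p,
            (conj (w i) * X i (Fin.castLE hpq i)
              - conj (w i) * Y i (Fin.castLE hpq i) /
                  ((1 : ℂ) - (‖w i‖ : ℂ) ^ 2))‖ ^ 2 := by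
  -- notation
  set a : Fin p → ℝ := fun i => 1 - ‖w i‖ ^ 2 with ha_def
  have ha : ∀ i, 0 < a i := fun i => by
    have h := hw i
    have h0 := norm_nonneg (w i)
    simp only [ha_def]
    nlinarith
  have ha1 : ∀ i, a i ≤ 1 := fun i => by
    have h0 := norm_nonneg (w i)
    simp only [ha_def]; nlinarith
  -- abbreviations for diagonal quantities
  set u : Fin p → ℝ := fun i =>
    ‖X i (Fin.castLE hpq i) - Y i (Fin.castLE hpq i)‖ with hu_def
  set v : Fin p → ℝ := fun i =>
    (1 / a i - 1) * ‖Y i (Fin.castLE hpq i)‖ with hv_def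
  have hu0 : ∀ i, 0 ≤ u i := fun i => norm_nonneg _
  have hv0 : ∀ i, 0 ≤ v i := fun i => by
    have := ha i; have := ha1 i
    have : (0:ℝ) ≤ 1 / a i - 1 := by
      rw [sub_nonneg, le_div_iff₀ (ha i)]; linarith
    exact mul_nonneg this (norm_nonneg _)
  -- second sum is nonnegative
  have hS2 : 0 ≤ ∑ i : Fin p, ∑ j ∈ Finset.univ.filter (fun j : Fin q => p ≤ (j : ℕ)),
      (‖X i j‖ ^ 2 - 2 * (X i j * conj (Y i j)).re
        + ‖Y i j‖ ^ 2 / (1 - ‖w i‖ ^ 2)) := by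
    refine Finset.sum_nonneg fun i _ => Finset.sum_nonneg fun j _ => ?_
    rw [term_identity _ _ _ (ha i)]
    have h1 : (0:ℝ) ≤ 1 / a i - 1 := by
      rw [sub_nonneg, le_div_iff₀ (ha i)]; linarith [ha1 i]
    positivity
  -- first sum dominates sum of diagonal terms, each diagonal term ≥ u i ^2 + v i ^2
  have hS1 : ∑ i : Fin p, (u i ^ 2 + v i ^ 2) ≤
      ∑ i : Fin p, ∑ j : Fin p,
        (‖X i (Fin.castLE hpq j)‖ ^ 2
          - 2 * (X i (Fin.castLE hpq j) * conj (Y i (Fin.castLE hpq j))).re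
          + ‖Y i (Fin.castLE hpq j)‖ ^ 2 /
              ((1 - ‖w i‖ ^ 2) * (1 - ‖w j‖ ^ 2))) := by
    refine Finset.sum_le_sum fun i _ => ?_
    have hdiag : u i ^ 2 + v i ^ 2 ≤
        ‖X i (Fin.castLE hpq i)‖ ^ 2
          - 2 * (X i (Fin.castLE hpq i) * conj (Y i (Fin.castLE hpq i))).re
          + ‖Y i (Fin.castLE hpq i)‖ ^ 2 /
              ((1 - ‖w i‖ ^ 2) * (1 - ‖w i‖ ^ 2)) := by
      rw [term_identity _ _ _ (mul_pos (ha i) (ha i))]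
      have key : v i ^ 2 ≤ (1 / (a i * a i) - 1) * ‖Y i (Fin.castLE hpq i)‖ ^ 2 := by
        have hai := ha i; have hai1 := ha1 i
        have h2 : (1 / a i - 1) ^ 2 ≤ 1 / (a i * a i) - 1 := by
          have h3 : 0 < a i * a i := mul_pos hai hai
          rw [div_sub_one hai.ne', div_pow, div_sub_one h3.ne',
            div_le_div_iff₀ (by positivity) h3]
          nlinarith [mul_nonneg (mul_nonneg (mul_nonneg hai.le hai.le) hai.le)
            (by linarith : (0:ℝ) ≤ 1 - a i)]
        calc v i ^ 2 = (1 / a i - 1) ^ 2 * ‖Y i (Fin.castLE hpq i)‖ ^ 2 := by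
              rw [hv_def]; ring
          _ ≤ _ := by
              apply mul_le_mul_of_nonneg_right h2 (by positivity)
      simp only [hu_def]
      linarith
    refine hdiag.trans ?_
    refine Finset.single_le_sum (f := fun j => ‖X i (Fin.castLE hpq j)‖ ^ 2
      - 2 * (X i (Fin.castLE hpq j) * conj (Y i (Fin.castLE hpq j))).re
      + ‖Y i (Fin.castLE hpq j)‖ ^ 2 /
          ((1 - ‖w i‖ ^ 2) * (1 - ‖w j‖ ^ 2)))
      (fun j _ => ?_) (Finset.mem_univ i)
    beta_reduce
    rw [term_identity _ _ _ (mul_pos (ha i) (ha j))]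
    have h1 : (0:ℝ) ≤ 1 / (a i * a j) - 1 := by
      rw [sub_nonneg, le_div_iff₀ (mul_pos (ha i) (ha j))]
      nlinarith [ha i, ha j, ha1 i, ha1 j]
    positivity
  -- bound the modulus term
  have hz : ∀ i : Fin p, ‖conj (w i) * X i (Fin.castLE hpq i)
        - conj (w i) * Y i (Fin.castLE hpq i) /
            ((1 : ℂ) - (‖w i‖ : ℂ) ^ 2)‖ ≤ u i + v i := by
    intro i
    have hca : ((1 : ℂ) - (‖w i‖ : ℂ) ^ 2) = ((a i : ℝ) : ℂ) := by
      simp [ha_def]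
    rw [hca]
    have hfac : conj (w i) * X i (Fin.castLE hpq i)
        - conj (w i) * Y i (Fin.castLE hpq i) / ((a i : ℝ) : ℂ)
        = conj (w i) * ((X i (Fin.castLE hpq i) - Y i (Fin.castLE hpq i))
            - ((1 / a i - 1 : ℝ) : ℂ) * Y i (Fin.castLE hpq i)) := by
      have hne : ((a i : ℝ) : ℂ) ≠ 0 := by
        exact_mod_cast Complex.ofReal_ne_zero.mpr (ha i).ne'
      push_cast
      field_simp
      try ring
    rw [hfac, norm_mul]
    have hwle : ‖conj (w i)‖ ≤ 1 := by
      rw [Complex.norm_conj]; exact (hw i).le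
    calc ‖conj (w i)‖ * ‖(X i (Fin.castLE hpq i) - Y i (Fin.castLE hpq i))
            - ((1 / a i - 1 : ℝ) : ℂ) * Y i (Fin.castLE hpq i)‖
        ≤ 1 * ‖(X i (Fin.castLE hpq i) - Y i (Fin.castLE hpq i))
            - ((1 / a i - 1 : ℝ) : ℂ) * Y i (Fin.castLE hpq i)‖ :=
          mul_le_mul_of_nonneg_right hwle (norm_nonneg _)
      _ ≤ u i + v i := by
          rw [one_mul]
          refine (norm_sub_le _ _).trans ?_
          rw [norm_mul, Complex.norm_real, Real.norm_eq_abs]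
          have h1 : (0:ℝ) ≤ 1 / a i - 1 := by
            rw [sub_nonneg, le_div_iff₀ (ha i)]; linarith [ha1 i]
          rw [abs_of_nonneg h1]
  have hM : ‖∑ i : Fin p,
      (conj (w i) * X i (Fin.castLE hpq i)
        - conj (w i) * Y i (Fin.castLE hpq i) /
            ((1 : ℂ) - (‖w i‖ : ℂ) ^ 2))‖ ≤ ∑ i : Fin p, (u i + v i) :=
    (norm_sum_le _ _).trans (Finset.sum_le_sum fun i _ => hz i)
  have hM2 : ‖∑ i : Fin p,
      (conj (w i) * X i (Fin.castLE hpq i)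
        - conj (w i) * Y i (Fin.castLE hpq i) /
            ((1 : ℂ) - (‖w i‖ : ℂ) ^ 2))‖ ^ 2
      ≤ (∑ i : Fin p, (u i + v i)) ^ 2 :=
    pow_le_pow_left₀ (norm_nonneg _) hM 2
  have hCS : (∑ i : Fin p, (u i + v i)) ^ 2 ≤ (p : ℝ) * ∑ i : Fin p, (u i + v i) ^ 2 := by
    have := sq_sum_le_card_mul_sum_sq (s := (Finset.univ : Finset (Fin p)))
      (f := fun i => u i + v i)
    simpa using this
  have hsq : ∑ i : Fin p, (u i + v i) ^ 2 ≤ 2 * ∑ i : Fin p, (u i ^ 2 + v i ^ 2) := by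
    rw [Finset.mul_sum]
    exact Finset.sum_le_sum fun i _ => by nlinarith [sq_nonneg (u i - v i)]
  -- combine
  have hrpos : (0:ℝ) < r := by
    have : (1:ℝ) ≤ (p:ℝ) := by exact_mod_cast hp
    linarith
  have hdiagsum : 0 ≤ ∑ i : Fin p, (u i ^ 2 + v i ^ 2) :=
    Finset.sum_nonneg fun i _ => by positivity
  have hfinal : (1 / r) *
      ‖∑ i : Fin p,
        (conj (w i) * X i (Fin.castLE hpq i)
          - conj (w i) * Y i (Fin.castLE hpq i) /
              ((1 : ℂ) - (‖w i‖ : ℂ) ^ 2))‖ ^ 2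
      ≤ ∑ i : Fin p, (u i ^ 2 + v i ^ 2) := by
    have h1 : ‖∑ i : Fin p,
        (conj (w i) * X i (Fin.castLE hpq i)
          - conj (w i) * Y i (Fin.castLE hpq i) /
              ((1 : ℂ) - (‖w i‖ : ℂ) ^ 2))‖ ^ 2
        ≤ 2 * p * ∑ i : Fin p, (u i ^ 2 + v i ^ 2) := by
      calc _ ≤ (∑ i : Fin p, (u i + v i)) ^ 2 := hM2
        _ ≤ (p : ℝ) * ∑ i : Fin p, (u i + v i) ^ 2 := hCS
        _ ≤ (p : ℝ) * (2 * ∑ i : Fin p, (u i ^ 2 + v i ^ 2)) :=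
            mul_le_mul_of_nonneg_left hsq (by positivity)
        _ = 2 * p * ∑ i : Fin p, (u i ^ 2 + v i ^ 2) := by ring
    rw [div_mul_eq_mul_div, one_mul, div_le_iff₀ hrpos]
    calc ‖_‖ ^ 2 ≤ 2 * p * ∑ i : Fin p, (u i ^ 2 + v i ^ 2) := h1
      _ ≤ r * ∑ i : Fin p, (u i ^ 2 + v i ^ 2) :=
          mul_le_mul_of_nonneg_right hr hdiagsum
      _ = (∑ i : Fin p, (u i ^ 2 + v i ^ 2)) * r := by ring
  linarith [hS1, hS2, hfinal]
end
end

section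
/- Let 1 ≤ p ≤ q be integers, let r be a real number with r ≥ 2p, and let w₁, …, w_p be complex numbers with |w_i| < 1 for all i. Then for all matrices X, Y ∈ M_{p×q}(ℂ) with (X,Y) ≠ (0,0): Σ_{j=1}^p Σ_{k=1}^p ( |X_{jk}|² + |Y_{jk}|²/((1 − |w_k|²)(1 − |w_j|²)) ) + Σ_{j=1}^p Σ_{k=p+1}^q ( |X_{jk}|² + |Y_{jk}|²/(1 − |w_j|²) ) − (1/r) · | Σ_{j=1}^p w_j X_{jj} − Σ_{j=1}^p conj(w_j) Y_{jj}/(1 − |w_j|²) |² > 0. (This is the key strict inequality in the proof that −δ̄^{1/r} is a bounded strictly plurisubharmonic exhaustion for the conjugate-twisted quotient Ω × Ω / Γ̄ in the type I case.) -/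
open scoped ComplexConjugate

noncomputable section

/-- The key strict inequality in the proof that `−δ̄^{1/r}` is a bounded strictly
plurisubharmonic exhaustion for the conjugate-twisted quotient (type I case): for
`r ≥ 2p`, `|w_j| < 1` and `(X,Y) ≠ (0,0)`,
`Σ_{j,k ≤ p} (|X_{jk}|² + |Y_{jk}|²/((1−|w_k|²)(1−|w_j|²)))`
`+ Σ_{j ≤ p, p < k ≤ q} (|X_{jk}|² + |Y_{jk}|²/(1−|w_j|²))`
`− (1/r)|Σ_j w_j X_{jj} − Σ_j conj(w_j) Y_{jj}/(1−|w_j|²)|² > 0`. -/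
theorem key_strict_inequality_steinness_typeI (p q : ℕ) (hp : 1 ≤ p) (hpq : p ≤ q)
    (r : ℝ) (hr : 2 * p ≤ r)
    (w : Fin p → ℂ) (hw : ∀ i, ‖w i‖ < 1)
    (X Y : Matrix (Fin p) (Fin q) ℂ) (hXY : (X, Y) ≠ (0, 0)) :
    0 < (∑ j : Fin p, ∑ k : Fin p,
          (‖X j (Fin.castLE hpq k)‖ ^ 2
            + ‖Y j (Fin.castLE hpq k)‖ ^ 2 /
                ((1 - ‖w k‖ ^ 2) * (1 - ‖w j‖ ^ 2))))
        + (∑ j : Fin p, ∑ k ∈ Finset.univ.filter (fun k : Fin q => p ≤ (k : ℕ)),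
          (‖X j k‖ ^ 2
            + ‖Y j k‖ ^ 2 / (1 - ‖w j‖ ^ 2)))
        - (1 / r) *
          ‖(∑ j : Fin p, w j * X j (Fin.castLE hpq j))
            - ∑ j : Fin p, conj (w j) * Y j (Fin.castLE hpq j) /
                ((1 : ℂ) - ((‖w j‖ : ℝ) : ℂ) ^ 2)‖ ^ 2 := by
  have hd : ∀ j, 0 < 1 - ‖w j‖ ^ 2 := by
    intro j
    have h1 := hw j
    have h0 := norm_nonneg (w j)
    nlinarith
  set d : Fin p → ℝ := fun j => 1 - ‖w j‖ ^ 2 with hd_def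
  have hd' : ∀ j, 0 < d j := hd
  set a : Fin p → ℂ := fun j => w j * X j (Fin.castLE hpq j) with ha_def
  set b : Fin p → ℂ := fun j => conj (w j) * Y j (Fin.castLE hpq j) /
      ((1 : ℂ) - ((‖w j‖ : ℝ) : ℂ) ^ 2) with hb_def
  have habs_a : ∀ j, ‖a j‖
      = ‖w j‖ * ‖X j (Fin.castLE hpq j)‖ :=
    fun j => norm_mul _ _
  have habs_b : ∀ j, ‖b j‖
      = ‖w j‖ * ‖Y j (Fin.castLE hpq j)‖ / d j := by
    intro j
    have hcast : ((1 : ℂ) - ((‖w j‖ : ℝ) : ℂ) ^ 2) = ((d j : ℝ) : ℂ) := by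
      simp only [hd_def]; push_cast; ring
    show ‖conj (w j) * Y j (Fin.castLE hpq j)
        / ((1 : ℂ) - ((‖w j‖ : ℝ) : ℂ) ^ 2)‖ = _
    rw [hcast, norm_div, norm_mul, Complex.norm_conj, Complex.norm_real, Real.norm_eq_abs,
      abs_of_pos (hd' j)]
  set c : Fin p → ℝ := fun j => ‖X j (Fin.castLE hpq j)‖ ^ 2
      + ‖Y j (Fin.castLE hpq j)‖ ^ 2 / (d j) ^ 2 with hc_def
  have hc_nonneg : ∀ j, 0 ≤ c j := by
    intro j
    show (0:ℝ) ≤ _ + _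
    have : 0 ≤ ‖Y j (Fin.castLE hpq j)‖ ^ 2 / (d j) ^ 2 :=
      div_nonneg (sq_nonneg _) (sq_nonneg _)
    have h2 : (0:ℝ) ≤ ‖X j (Fin.castLE hpq j)‖ ^ 2 := sq_nonneg _
    linarith
  have hrpos : (0 : ℝ) < r := by
    have h1 : (1:ℝ) ≤ p := by exact_mod_cast hp
    linarith
  -- the subtracted term is ≤ ∑ |w j|² c j
  have hU : (1 / r) * ‖(∑ j : Fin p, a j) - ∑ j : Fin p, b j‖ ^ 2
      ≤ ∑ j : Fin p, ‖w j‖ ^ 2 * c j := by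
    have h1 : ‖(∑ j : Fin p, a j) - ∑ j : Fin p, b j‖
        ≤ ∑ j : Fin p, (‖a j‖ + ‖b j‖) := by
      calc ‖(∑ j : Fin p, a j) - ∑ j : Fin p, b j‖
          ≤ ‖∑ j : Fin p, a j‖ + ‖∑ j : Fin p, b j‖ :=
            norm_sub_le _ _
        _ ≤ (∑ j : Fin p, ‖a j‖) + ∑ j : Fin p, ‖b j‖ :=
            add_le_add (norm_sum_le _ _) (norm_sum_le _ _)
        _ = _ := by rw [Finset.sum_add_distrib]
    have h2 : (∑ j : Fin p, (‖a j‖ + ‖b j‖)) ^ 2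
        ≤ p * ∑ j : Fin p, (‖a j‖ + ‖b j‖) ^ 2 := by
      have := sq_sum_le_card_mul_sum_sq
        (s := (Finset.univ : Finset (Fin p)))
        (f := fun j => ‖a j‖ + ‖b j‖)
      simpa using this
    have h3 : ∀ j, (‖a j‖ + ‖b j‖) ^ 2
        ≤ 2 * (‖a j‖ ^ 2 + ‖b j‖ ^ 2) := by
      intro j
      nlinarith [sq_nonneg (‖a j‖ - ‖b j‖)]
    have h4 : ∀ j, ‖a j‖ ^ 2 + ‖b j‖ ^ 2
        = ‖w j‖ ^ 2 * c j := by
      intro j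
      rw [habs_a, habs_b]
      show _ = ‖w j‖ ^ 2 * (_ + _)
      have hdj := (hd' j).ne'
      field_simp
    have h5 : ‖(∑ j : Fin p, a j) - ∑ j : Fin p, b j‖ ^ 2
        ≤ 2 * p * ∑ j : Fin p, ‖w j‖ ^ 2 * c j := by
      calc ‖(∑ j : Fin p, a j) - ∑ j : Fin p, b j‖ ^ 2
          ≤ (∑ j : Fin p, (‖a j‖ + ‖b j‖)) ^ 2 :=
            pow_le_pow_left₀ (norm_nonneg _) h1 2
        _ ≤ p * ∑ j : Fin p, (‖a j‖ + ‖b j‖) ^ 2 := h2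
        _ ≤ p * ∑ j : Fin p, 2 * (‖a j‖ ^ 2 + ‖b j‖ ^ 2) := by
            apply mul_le_mul_of_nonneg_left _ (by positivity)
            exact Finset.sum_le_sum fun j _ => h3 j
        _ = 2 * p * ∑ j : Fin p, (‖a j‖ ^ 2 + ‖b j‖ ^ 2) := by
            rw [← Finset.mul_sum]; ring
        _ = 2 * p * ∑ j : Fin p, ‖w j‖ ^ 2 * c j := by
            congr 1; exact Finset.sum_congr rfl fun j _ => h4 j
    have hsum_nonneg : 0 ≤ ∑ j : Fin p, ‖w j‖ ^ 2 * c j := by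
      apply Finset.sum_nonneg; intro j _
      exact mul_nonneg (sq_nonneg _) (hc_nonneg j)
    rw [div_mul_eq_mul_div, one_mul, div_le_iff₀ hrpos]
    calc ‖(∑ j : Fin p, a j) - ∑ j : Fin p, b j‖ ^ 2
        ≤ 2 * p * ∑ j : Fin p, ‖w j‖ ^ 2 * c j := h5
      _ ≤ (∑ j : Fin p, ‖w j‖ ^ 2 * c j) * r := by
          rw [mul_comm _ r]
          exact mul_le_mul_of_nonneg_right hr hsum_nonneg
  -- abbreviate the two big sums
  have ht_nonneg : ∀ j k : Fin p, 0 ≤ ‖X j (Fin.castLE hpq k)‖ ^ 2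
      + ‖Y j (Fin.castLE hpq k)‖ ^ 2 / (d k * d j) := by
    intro j k
    have h1 : (0:ℝ) ≤ ‖Y j (Fin.castLE hpq k)‖ ^ 2 / (d k * d j) :=
      div_nonneg (sq_nonneg _) (mul_pos (hd' k) (hd' j)).le
    have h2 : (0:ℝ) ≤ ‖X j (Fin.castLE hpq k)‖ ^ 2 := sq_nonneg _
    linarith
  have hs_nonneg : ∀ (j : Fin p) (k : Fin q), 0 ≤ ‖X j k‖ ^ 2
      + ‖Y j k‖ ^ 2 / d j := by
    intro j k
    have h1 : (0:ℝ) ≤ ‖Y j k‖ ^ 2 / d j :=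
      div_nonneg (sq_nonneg _) (hd' j).le
    have h2 : (0:ℝ) ≤ ‖X j k‖ ^ 2 := sq_nonneg _
    linarith
  set S1 : ℝ := ∑ j : Fin p, ∑ k : Fin p,
      (‖X j (Fin.castLE hpq k)‖ ^ 2
        + ‖Y j (Fin.castLE hpq k)‖ ^ 2 / (d k * d j)) with hS1_def
  set S2 : ℝ := ∑ j : Fin p, ∑ k ∈ Finset.univ.filter (fun k : Fin q => p ≤ (k : ℕ)),
      (‖X j k‖ ^ 2 + ‖Y j k‖ ^ 2 / d j) with hS2_def
  have hS2_nonneg : 0 ≤ S2 :=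
    Finset.sum_nonneg fun j _ => Finset.sum_nonneg fun k _ => hs_nonneg j k
  have hS1_ge : (∑ j : Fin p, c j) ≤ S1 := by
    apply Finset.sum_le_sum
    intro j _
    have hcj : c j = ‖X j (Fin.castLE hpq j)‖ ^ 2
        + ‖Y j (Fin.castLE hpq j)‖ ^ 2 / (d j * d j) := by
      show _ + _ = _
      rw [sq (d j)]
    rw [hcj]
    exact Finset.single_le_sum (fun k _ => ht_nonneg j k) (Finset.mem_univ j)
  -- main strict inequality
  have hmain : (∑ j : Fin p, ‖w j‖ ^ 2 * c j) < S1 + S2 := by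
    by_cases hcase : ∃ j, 0 < c j
    · obtain ⟨j0, hj0⟩ := hcase
      have hlt : (∑ j : Fin p, ‖w j‖ ^ 2 * c j) < ∑ j : Fin p, c j := by
        apply Finset.sum_lt_sum
        · intro j _
          have hw1 : ‖w j‖ ^ 2 ≤ 1 := by
            have := hw j; have := norm_nonneg (w j); nlinarith
          nlinarith [hc_nonneg j]
        · refine ⟨j0, Finset.mem_univ j0, ?_⟩
          have hw1 : ‖w j0‖ ^ 2 < 1 := by
            have := hw j0; have := norm_nonneg (w j0); nlinarith
          nlinarith
      linarith
    · push_neg at hcase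
      have hU0 : (∑ j : Fin p, ‖w j‖ ^ 2 * c j) = 0 := by
        apply Finset.sum_eq_zero; intro j _
        have : c j = 0 := le_antisymm (hcase j) (hc_nonneg j)
        rw [this, mul_zero]
      rw [hU0]
      obtain ⟨j, k, hne⟩ : ∃ j k, X j k ≠ 0 ∨ Y j k ≠ 0 := by
        by_contra hcon
        push_neg at hcon
        apply hXY
        have hX : X = 0 := by ext j k; exact (hcon j k).1
        have hY : Y = 0 := by ext j k; exact (hcon j k).2
        rw [hX, hY]
      by_cases hk : (k : ℕ) < p
      · set k' : Fin p := ⟨(k : ℕ), hk⟩ with hk'_def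
        have hck : Fin.castLE hpq k' = k := by ext; simp [hk'_def]
        have hpos : 0 < ‖X j (Fin.castLE hpq k')‖ ^ 2
            + ‖Y j (Fin.castLE hpq k')‖ ^ 2 / (d k' * d j) := by
          rw [hck]
          rcases hne with h | h
          · have h1 : 0 < ‖X j k‖ ^ 2 :=
              pow_pos (norm_pos_iff.mpr h) 2
            have h2 : (0:ℝ) ≤ ‖Y j k‖ ^ 2 / (d k' * d j) :=
              div_nonneg (sq_nonneg _) (mul_pos (hd' k') (hd' j)).le
            linarith
          · have h1 : 0 < ‖Y j k‖ ^ 2 / (d k' * d j) :=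
              div_pos (pow_pos (norm_pos_iff.mpr h) 2) (mul_pos (hd' k') (hd' j))
            have h2 : (0:ℝ) ≤ ‖X j k‖ ^ 2 := sq_nonneg _
            linarith
        have hS1_pos : 0 < S1 := by
          rw [hS1_def]
          refine Finset.sum_pos' (fun i _ => Finset.sum_nonneg fun l _ => ht_nonneg i l)
            ⟨j, Finset.mem_univ j, ?_⟩
          exact Finset.sum_pos' (fun l _ => ht_nonneg j l)
            ⟨k', Finset.mem_univ k', hpos⟩
        linarith
      · push_neg at hk
        have hpos : 0 < ‖X j k‖ ^ 2 + ‖Y j k‖ ^ 2 / d j := by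
          rcases hne with h | h
          · have h1 : 0 < ‖X j k‖ ^ 2 := pow_pos (norm_pos_iff.mpr h) 2
            have h2 : (0:ℝ) ≤ ‖Y j k‖ ^ 2 / d j :=
              div_nonneg (sq_nonneg _) (hd' j).le
            linarith
          · have h1 : 0 < ‖Y j k‖ ^ 2 / d j :=
              div_pos (pow_pos (norm_pos_iff.mpr h) 2) (hd' j)
            have h2 : (0:ℝ) ≤ ‖X j k‖ ^ 2 := sq_nonneg _
            linarith
        have hS2_pos : 0 < S2 := by
          rw [hS2_def]
          refine Finset.sum_pos' (fun i _ => Finset.sum_nonneg fun l _ => hs_nonneg i l)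
            ⟨j, Finset.mem_univ j, ?_⟩
          exact Finset.sum_pos' (fun l _ => hs_nonneg j l)
            ⟨k, Finset.mem_filter.mpr ⟨Finset.mem_univ k, hk⟩, hpos⟩
        have hS1_nonneg : 0 ≤ S1 :=
          Finset.sum_nonneg fun i _ => Finset.sum_nonneg fun l _ => ht_nonneg i l
        linarith
  have hfinal := lt_of_le_of_lt hU hmain
  -- bridge back to the original expressions (definitional equality)
  show 0 < S1 + S2
      - (1 / r) * ‖(∑ j : Fin p, a j) - ∑ j : Fin p, b j‖ ^ 2
  linarith
end
end

section
/- Let n ≥ 1 and let 𝔹^n := {z ∈ ℂ^n : ‖z‖ < 1} be the unit ball. For all z, w ∈ 𝔹^n one has 1 − Σ_{j=1}^n z_j w_j ≠ 0, and the function (z,w) ↦ −( (1 − ‖z‖²)(1 − ‖w‖²)/|1 − Σ_{j=1}^n z_j w_j|² )^{1/2} is strictly plurisubharmonic on 𝔹^n × 𝔹^n and takes values in [−1, 0). (This is the strictly plurisubharmonic bounded function underlying the Steinness result for the conjugate-twisted ball bundle 𝔹^n × 𝔹^n/Γ̄.) -/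
open scoped ComplexConjugate

noncomputable section

/-- The unit ball `𝔹^n ⊆ ℂ^n`. -/
def unitBall (n : ℕ) : Set (Fin n → ℂ) :=
  {z | ∑ j, ‖z j‖ ^ 2 < 1}

/-- `δ̄(z,w) = (1 − ‖z‖²)(1 − ‖w‖²)/|1 − Σ_j z_j w_j|²`, with the bilinear
(non-conjugated) pairing. -/
def deltaBarBall (n : ℕ) (z w : Fin n → ℂ) : ℝ :=
  ((1 - ∑ j, ‖z j‖ ^ 2) * (1 - ∑ j, ‖w j‖ ^ 2)) /
    ‖1 - ∑ j, z j * w j‖ ^ 2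

/-- Strict plurisubharmonicity on a set in a complex vector space. -/
def StrictPSHOn {E : Type*} [AddCommGroup E] [Module ℂ E] (u : E → ℝ) (U : Set E) : Prop :=
  ∀ a ∈ U, ∀ v : E, v ≠ 0 → 0 < laplacianAt fun t : ℂ => u (a + t • v)

open Finset Filter Topology

namespace DeltaBarAux

variable {n : ℕ}

lemma cs_bilinear (u v : Fin n → ℂ) :
    Complex.normSq (∑ j, u j * v j)
      ≤ (∑ j, Complex.normSq (u j)) * (∑ j, Complex.normSq (v j)) := by
  have h1 : ‖∑ j, u j * v j‖ ≤ ∑ j, ‖u j‖ * ‖v j‖ := by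
    calc ‖∑ j, u j * v j‖ ≤ ∑ j, ‖u j * v j‖ := by
          simpa using norm_sum_le Finset.univ (fun j => u j * v j)
      _ = ∑ j, ‖u j‖ * ‖v j‖ := by simp [norm_mul]
  have h2 : (∑ j, ‖u j‖ * ‖v j‖) ^ 2
      ≤ (∑ j, ‖u j‖ ^ 2) * (∑ j, ‖v j‖ ^ 2) :=
    Finset.sum_mul_sq_le_sq_mul_sq _ _ _
  have h3 : ‖∑ j, u j * v j‖ ^ 2
      ≤ (∑ j, ‖u j‖ * ‖v j‖) ^ 2 :=
    pow_le_pow_left₀ (by positivity) h1 2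
  calc Complex.normSq (∑ j, u j * v j) = ‖∑ j, u j * v j‖ ^ 2 :=
        (Complex.sq_norm _).symm
    _ ≤ (∑ j, ‖u j‖ ^ 2) * (∑ j, ‖v j‖ ^ 2) := le_trans h3 h2
    _ = (∑ j, Complex.normSq (u j)) * (∑ j, Complex.normSq (v j)) := by
        simp [Complex.sq_norm]


lemma sum_normSq_nonneg (u : Fin n → ℂ) : 0 ≤ ∑ j, Complex.normSq (u j) :=
  Finset.sum_nonneg fun j _ => Complex.normSq_nonneg _


lemma one_sub_sum_ne_zero {z w : Fin n → ℂ}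
    (hz : ∑ j, Complex.normSq (z j) < 1) (hw : ∑ j, Complex.normSq (w j) < 1) :
    (1 : ℂ) - ∑ j, z j * w j ≠ 0 := by
  intro h
  have h1 : (∑ j, z j * w j) = 1 := by
    have := sub_eq_zero.mp h
    exact this.symm
  have h2 := cs_bilinear z w
  rw [h1] at h2
  simp only [Complex.normSq_one] at h2
  nlinarith [sum_normSq_nonneg z, sum_normSq_nonneg w]


lemma sum_normSq_add (u v : Fin n → ℂ) (t : ℂ) :
    ∑ j, Complex.normSq (u j + t * v j)
      = ∑ j, Complex.normSq (u j)
        + 2 * ((starRingEnd ℂ) t * ∑ j, u j * (starRingEnd ℂ) (v j)).re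
        + Complex.normSq t * ∑ j, Complex.normSq (v j) := by
  have key : ∀ j : Fin n, Complex.normSq (u j + t * v j)
      = Complex.normSq (u j) + 2 * ((starRingEnd ℂ) t * (u j * (starRingEnd ℂ) (v j))).re
        + Complex.normSq t * Complex.normSq (v j) := by
    intro j
    rw [Complex.normSq_add]
    have h1 : u j * (starRingEnd ℂ) (t * v j)
        = (starRingEnd ℂ) t * (u j * (starRingEnd ℂ) (v j)) := by
      rw [map_mul]; ring
    rw [h1, Complex.normSq_mul]
    ring
  rw [Finset.sum_congr rfl fun j _ => key j]
  rw [Finset.sum_add_distrib, Finset.sum_add_distrib, ← Finset.mul_sum, ← Finset.mul_sum]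
  congr 2
  rw [← Complex.re_sum, ← Finset.mul_sum]


lemma sum_mul_add (z w ζ ω : Fin n → ℂ) (t : ℂ) :
    ∑ j, (z j + t * ζ j) * (w j + t * ω j)
      = ∑ j, z j * w j + t * (∑ j, ζ j * w j + ∑ j, z j * ω j)
        + t ^ 2 * ∑ j, ζ j * ω j := by
  have key : ∀ j : Fin n, (z j + t * ζ j) * (w j + t * ω j)
      = z j * w j + t * (ζ j * w j + z j * ω j) + t ^ 2 * (ζ j * ω j) := fun j => by ring
  rw [Finset.sum_congr rfl fun j _ => key j, Finset.sum_add_distrib, Finset.sum_add_distrib,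
    ← Finset.mul_sum, ← Finset.mul_sum, Finset.sum_add_distrib]


lemma sum_eta_w (z w ζ : Fin n → ℂ) (hp : (1 : ℂ) - ∑ j, z j * w j ≠ 0) :
    ∑ j, (ζ j + ((∑ j, ζ j * w j) / (1 - ∑ j, z j * w j)) * z j) * w j
      = (∑ j, ζ j * w j) / (1 - ∑ j, z j * w j) := by
  set S1 := ∑ j, ζ j * w j with hS1
  set T := ∑ j, z j * w j with hT
  set μ := S1 / (1 - T) with hμ
  have expand : ∀ j : Fin n, (ζ j + μ * z j) * w j = ζ j * w j + μ * (z j * w j) :=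
    fun j => by ring
  rw [Finset.sum_congr rfl fun j _ => expand j, Finset.sum_add_distrib, ← Finset.mul_sum,
    ← hS1, ← hT]
  have hμp : μ * (1 - T) = S1 := div_mul_cancel₀ _ hp
  linear_combination -hμp


lemma eta_pos (z w ζ : Fin n → ℂ) (hp : (1 : ℂ) - ∑ j, z j * w j ≠ 0) (hζ : ζ ≠ 0) :
    0 < ∑ j, Complex.normSq (ζ j + ((∑ j, ζ j * w j) / (1 - ∑ j, z j * w j)) * z j) := by
  set μ := (∑ j, ζ j * w j) / (1 - ∑ j, z j * w j) with hμ
  rcases lt_or_eq_of_le (sum_normSq_nonneg (fun j => ζ j + μ * z j)) with h | h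
  · exact h
  · exfalso
    have hall : ∀ j : Fin n, ζ j + μ * z j = 0 := by
      intro j
      have := (Finset.sum_eq_zero_iff_of_nonneg
        (fun j _ => Complex.normSq_nonneg (ζ j + μ * z j))).mp h.symm j (Finset.mem_univ j)
      exact Complex.normSq_eq_zero.mp this
    have hμ0 : μ = 0 := by
      have h1 := sum_eta_w z w ζ hp
      rw [← hμ] at h1
      rw [← h1]
      apply Finset.sum_eq_zero
      intro j _
      rw [hall j, zero_mul]
    apply hζ
    funext j
    have := hall j
    rw [hμ0, zero_mul, add_zero] at this
    exact this

/-- Per-vector inequality with slack term. -/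

lemma pv (z w ζ : Fin n → ℂ) (hz : ∑ j, Complex.normSq (z j) < 1)
    (hw : ∑ j, Complex.normSq (w j) < 1) :
    Complex.normSq ((∑ j, ζ j * (starRingEnd ℂ) (z j)) / ((1 - ∑ j, Complex.normSq (z j) : ℝ) : ℂ)
        - (∑ j, ζ j * w j) / (1 - ∑ j, z j * w j))
      + (1 - ∑ j, Complex.normSq (w j)) / (1 - ∑ j, Complex.normSq (z j))
          * ∑ j, Complex.normSq (ζ j + ((∑ j, ζ j * w j) / (1 - ∑ j, z j * w j)) * z j)
    ≤ (∑ j, Complex.normSq (ζ j)) / (1 - ∑ j, Complex.normSq (z j))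
      + Complex.normSq (∑ j, ζ j * (starRingEnd ℂ) (z j))
          / (1 - ∑ j, Complex.normSq (z j)) ^ 2 := by
  have hp : (1 : ℂ) - ∑ j, z j * w j ≠ 0 := one_sub_sum_ne_zero hz hw
  set a2 := ∑ j, Complex.normSq (z j) with ha2
  set b2 := ∑ j, Complex.normSq (w j) with hb2
  set A : ℝ := 1 - a2 with hA
  have hApos : 0 < A := by simp [hA]; linarith
  set B := ∑ j, ζ j * (starRingEnd ℂ) (z j) with hB
  set S1 := ∑ j, ζ j * w j with hS1
  set μ := S1 / (1 - ∑ j, z j * w j) with hμ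
  set C := ∑ j, Complex.normSq (ζ j) with hC
  set Nη := ∑ j, Complex.normSq (ζ j + μ * z j) with hNη
  -- expansion of Nη
  have hNeta : Nη = C + 2 * ((starRingEnd ℂ) μ * B).re + Complex.normSq μ * a2 :=
    sum_normSq_add ζ z μ
  -- Cauchy-Schwarz
  have hCS : Complex.normSq μ ≤ Nη * b2 := by
    have h1 : μ = ∑ j, (ζ j + μ * z j) * w j := (sum_eta_w z w ζ hp).symm
    calc Complex.normSq μ = Complex.normSq (∑ j, (ζ j + μ * z j) * w j) := by rw [← h1]
      _ ≤ Nη * b2 := cs_bilinear _ _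
  -- expansion of normSq X
  have hXval : Complex.normSq (B / (A : ℂ) - μ)
      = Complex.normSq B / A ^ 2 - 2 * ((B * (starRingEnd ℂ) μ).re) / A + Complex.normSq μ := by
    rw [Complex.normSq_sub]
    have h2 : B / (A : ℂ) * (starRingEnd ℂ) μ = B * (starRingEnd ℂ) μ / (A : ℂ) := by ring
    rw [Complex.normSq_div, Complex.normSq_ofReal, h2, Complex.div_ofReal_re]
    ring
  have hre : ((starRingEnd ℂ) μ * B).re = (B * (starRingEnd ℂ) μ).re := by rw [mul_comm]
  rw [hre] at hNeta
  set rBμ := (B * (starRingEnd ℂ) μ).re with hrBμ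
  set nμ := Complex.normSq μ with hnμ
  -- target reduces to real inequality
  have key : (C / A + Complex.normSq B / A ^ 2)
      - ((Complex.normSq B / A ^ 2 - 2 * rBμ / A + nμ) + ((1 - b2) / A) * Nη)
      = (Nη * b2 - nμ) / A := by
    have hCval : C = Nη - 2 * rBμ - nμ * a2 := by linarith [hNeta]
    rw [hCval]
    field_simp
    ring
  have hslack : 0 ≤ (Nη * b2 - nμ) / A := by
    apply div_nonneg _ hApos.le
    linarith [hCS]
  rw [hXval]
  -- A = 1 - a2 and the goal's (1 - ∑ ...) are the same
  linarith [key, hslack]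


lemma normSq_add_le_two (X Y : ℂ) :
    Complex.normSq (X + Y) ≤ 2 * Complex.normSq X + 2 * Complex.normSq Y := by
  rw [Complex.normSq_add]
  have h1 : (X * (starRingEnd ℂ) Y).re ≤ ‖X * (starRingEnd ℂ) Y‖ :=
    Complex.re_le_norm _
  have h2 : ‖X * (starRingEnd ℂ) Y‖ = ‖X‖ * ‖Y‖ := by
    rw [norm_mul, Complex.norm_conj]
  have h3 : Complex.normSq X = ‖X‖ ^ 2 := (Complex.sq_norm _).symm
  have h4 : Complex.normSq Y = ‖Y‖ ^ 2 := (Complex.sq_norm _).symm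
  nlinarith [sq_nonneg (‖X‖ - ‖Y‖)]


lemma star_ineq (z w ζ ω : Fin n → ℂ) (hz : ∑ j, Complex.normSq (z j) < 1)
    (hw : ∑ j, Complex.normSq (w j) < 1) (hv : ¬(ζ = 0 ∧ ω = 0)) :
    Complex.normSq ((∑ j, ζ j * (starRingEnd ℂ) (z j)) / ((1 - ∑ j, Complex.normSq (z j) : ℝ) : ℂ)
        + (∑ j, ω j * (starRingEnd ℂ) (w j)) / ((1 - ∑ j, Complex.normSq (w j) : ℝ) : ℂ)
        - (∑ j, ζ j * w j + ∑ j, z j * ω j) / (1 - ∑ j, z j * w j))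
      < 2 * (∑ j, Complex.normSq (ζ j)) / (1 - ∑ j, Complex.normSq (z j))
        + 2 * (∑ j, Complex.normSq (ω j)) / (1 - ∑ j, Complex.normSq (w j))
        + 2 * Complex.normSq (∑ j, ζ j * (starRingEnd ℂ) (z j))
            / (1 - ∑ j, Complex.normSq (z j)) ^ 2
        + 2 * Complex.normSq (∑ j, ω j * (starRingEnd ℂ) (w j))
            / (1 - ∑ j, Complex.normSq (w j)) ^ 2 := by
  have hp : (1 : ℂ) - ∑ j, z j * w j ≠ 0 := one_sub_sum_ne_zero hz hw
  have hApos : (0:ℝ) < 1 - ∑ j, Complex.normSq (z j) := by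
    have := hz; linarith
  have hA'pos : (0:ℝ) < 1 - ∑ j, Complex.normSq (w j) := by
    have := hw; linarith
  set A : ℝ := 1 - ∑ j, Complex.normSq (z j)
  set A' : ℝ := 1 - ∑ j, Complex.normSq (w j)
  set B := ∑ j, ζ j * (starRingEnd ℂ) (z j) with hB
  set B' := ∑ j, ω j * (starRingEnd ℂ) (w j) with hB'
  set S1 := ∑ j, ζ j * w j with hS1
  set S2 := ∑ j, z j * ω j with hS2
  set p := (1 : ℂ) - ∑ j, z j * w j with hpdef
  set X := B / (A : ℂ) - S1 / p with hX
  set Y := B' / (A' : ℂ) - S2 / p with hY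
  have hdecomp : B / (A : ℂ) + B' / (A' : ℂ) - (S1 + S2) / p = X + Y := by
    rw [hX, hY]; ring
  -- rewrite pv for the second pair
  have hcommT : ∑ j, w j * z j = ∑ j, z j * w j :=
    Finset.sum_congr rfl fun j _ => mul_comm _ _
  have hcommS : ∑ j, ω j * z j = ∑ j, z j * ω j :=
    Finset.sum_congr rfl fun j _ => mul_comm _ _
  have pv1 := pv z w ζ hz hw
  have pv2 := pv w z ω hw hz
  rw [hcommT, hcommS] at pv2
  have hp2 : (1:ℂ) - ∑ j, w j * z j ≠ 0 := by rw [hcommT]; exact hp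
  have hXb : Complex.normSq X
      + A' / A * ∑ j, Complex.normSq (ζ j + S1 / p * z j)
      ≤ (∑ j, Complex.normSq (ζ j)) / A + Complex.normSq B / A ^ 2 := pv1
  have hYb : Complex.normSq Y
      + A / A' * ∑ j, Complex.normSq (ω j + S2 / p * w j)
      ≤ (∑ j, Complex.normSq (ω j)) / A' + Complex.normSq B' / A' ^ 2 := pv2
  rw [hdecomp]
  have hsum := normSq_add_le_two X Y
  -- strictness from whichever of ζ, ω is nonzero
  have hstrict : Complex.normSq X + Complex.normSq Y
      < (∑ j, Complex.normSq (ζ j)) / A + Complex.normSq B / A ^ 2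
        + ((∑ j, Complex.normSq (ω j)) / A' + Complex.normSq B' / A' ^ 2) := by
    have hnn1 : 0 ≤ A' / A * ∑ j, Complex.normSq (ζ j + S1 / p * z j) :=
      mul_nonneg (div_nonneg hA'pos.le hApos.le) (sum_normSq_nonneg _)
    have hnn2 : 0 ≤ A / A' * ∑ j, Complex.normSq (ω j + S2 / p * w j) :=
      mul_nonneg (div_nonneg hApos.le hA'pos.le) (sum_normSq_nonneg _)
    rcases not_and_or.mp hv with hζ | hω
    · have hη := eta_pos z w ζ hp hζ
      have hpos : 0 < A' / A * ∑ j, Complex.normSq (ζ j + S1 / p * z j) :=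
        mul_pos (div_pos hA'pos hApos) hη
      linarith
    · have hη := eta_pos w z ω hp2 hω
      rw [hcommT, hcommS] at hη
      have hpos : 0 < A / A' * ∑ j, Complex.normSq (ω j + S2 / p * w j) :=
        mul_pos (div_pos hApos hA'pos) hη
      linarith
  calc Complex.normSq (X + Y) ≤ 2 * Complex.normSq X + 2 * Complex.normSq Y := hsum
    _ < 2 * ((∑ j, Complex.normSq (ζ j)) / A + Complex.normSq B / A ^ 2
          + ((∑ j, Complex.normSq (ω j)) / A' + Complex.normSq B' / A' ^ 2)) := by
        linarith
    _ = 2 * (∑ j, Complex.normSq (ζ j)) / A + 2 * (∑ j, Complex.normSq (ω j)) / A'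
        + 2 * Complex.normSq B / A ^ 2 + 2 * Complex.normSq B' / A' ^ 2 := by ring


lemma hasDerivAt_poly4 (c0 c1 c2 c3 c4 x : ℝ) :
    HasDerivAt (fun x : ℝ => c0 + c1 * x + c2 * x ^ 2 + c3 * x ^ 3 + c4 * x ^ 4)
      (c1 + 2 * c2 * x + 3 * c3 * x ^ 2 + 4 * c4 * x ^ 3) x := by
  have h1 : HasDerivAt (fun x : ℝ => x) 1 x := hasDerivAt_id x
  have h2 : HasDerivAt (fun x : ℝ => x ^ 2) (2 * x) x := by simpa using hasDerivAt_pow 2 x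
  have h3 : HasDerivAt (fun x : ℝ => x ^ 3) (3 * x ^ 2) x := by simpa using hasDerivAt_pow 3 x
  have h4 : HasDerivAt (fun x : ℝ => x ^ 4) (4 * x ^ 3) x := by simpa using hasDerivAt_pow 4 x
  have h := ((((hasDerivAt_const x c0).add (h1.const_mul c1)).add (h2.const_mul c2)).add
    (h3.const_mul c3)).add (h4.const_mul c4)
  exact h.congr_deriv (by ring)

lemma hasDerivAt_poly3 (c0 c1 c2 c3 x : ℝ) :
    HasDerivAt (fun x : ℝ => c0 + c1 * x + c2 * x ^ 2 + c3 * x ^ 3)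
      (c1 + 2 * c2 * x + 3 * c3 * x ^ 2) x := by
  have h1 : HasDerivAt (fun x : ℝ => x) 1 x := hasDerivAt_id x
  have h2 : HasDerivAt (fun x : ℝ => x ^ 2) (2 * x) x := by simpa using hasDerivAt_pow 2 x
  have h3 : HasDerivAt (fun x : ℝ => x ^ 3) (3 * x ^ 2) x := by simpa using hasDerivAt_pow 3 x
  have h := (((hasDerivAt_const x c0).add (h1.const_mul c1)).add (h2.const_mul c2)).add
    (h3.const_mul c3)
  exact h.congr_deriv (by ring)

/-- Second derivative at `0` of `x ↦ -((quartic)/(quartic))^(1/2)`. -/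
lemma axis_second_deriv (a0 a1 a2 a3 a4 b0 b1 b2 b3 b4 : ℝ) (ha0 : 0 < a0) (hb0 : 0 < b0) :
    iteratedDeriv 2 (fun x : ℝ =>
      -((a0 + a1 * x + a2 * x ^ 2 + a3 * x ^ 3 + a4 * x ^ 4)
          / (b0 + b1 * x + b2 * x ^ 2 + b3 * x ^ 3 + b4 * x ^ 4)) ^ ((1:ℝ)/2)) 0
    = (((a1 * b0 - a0 * b1) / b0 ^ 2) ^ 2
        - 2 * (a0 / b0)
          * (((2 * a2 * b0 - 2 * a0 * b2) * b0 - 2 * (a1 * b0 - a0 * b1) * b1) / b0 ^ 3))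
      / (4 * (a0 / b0) ^ ((3:ℝ)/2)) := by
  have hPa : ∀ x, HasDerivAt (fun x : ℝ => a0 + a1 * x + a2 * x ^ 2 + a3 * x ^ 3 + a4 * x ^ 4)
      (a1 + 2 * a2 * x + 3 * a3 * x ^ 2 + 4 * a4 * x ^ 3) x :=
    fun x => hasDerivAt_poly4 a0 a1 a2 a3 a4 x
  have hPb : ∀ x, HasDerivAt (fun x : ℝ => b0 + b1 * x + b2 * x ^ 2 + b3 * x ^ 3 + b4 * x ^ 4)
      (b1 + 2 * b2 * x + 3 * b3 * x ^ 2 + 4 * b4 * x ^ 3) x :=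
    fun x => hasDerivAt_poly4 b0 b1 b2 b3 b4 x
  set Pa : ℝ → ℝ := fun x => a0 + a1 * x + a2 * x ^ 2 + a3 * x ^ 3 + a4 * x ^ 4 with hPadef
  set Pb : ℝ → ℝ := fun x => b0 + b1 * x + b2 * x ^ 2 + b3 * x ^ 3 + b4 * x ^ 4 with hPbdef
  set Da : ℝ → ℝ := fun x => a1 + 2 * a2 * x + 3 * a3 * x ^ 2 + 4 * a4 * x ^ 3 with hDadef
  set Db : ℝ → ℝ := fun x => b1 + 2 * b2 * x + 3 * b3 * x ^ 2 + 4 * b4 * x ^ 3 with hDbdef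
  have hDa : ∀ x, HasDerivAt Da (2 * a2 + 2 * (3 * a3) * x + 3 * (4 * a4) * x ^ 2) x := by
    intro x
    have h := hasDerivAt_poly3 a1 (2 * a2) (3 * a3) (4 * a4) x
    rw [hDadef]
    convert h using 2 <;> ring
  have hDb : ∀ x, HasDerivAt Db (2 * b2 + 2 * (3 * b3) * x + 3 * (4 * b4) * x ^ 2) x := by
    intro x
    have h := hasDerivAt_poly3 b1 (2 * b2) (3 * b3) (4 * b4) x
    rw [hDbdef]
    convert h using 2 <;> ring
  have hPa0 : Pa 0 = a0 := by simp [hPadef]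
  have hPb0 : Pb 0 = b0 := by simp [hPbdef]
  have hDa0 : Da 0 = a1 := by simp [hDadef]
  have hDb0 : Db 0 = b1 := by simp [hDbdef]
  have hPbpos : ∀ᶠ x in 𝓝 (0:ℝ), 0 < Pb x :=
    (hPb 0).continuousAt.eventually (p := fun y => 0 < y)
      (eventually_gt_nhds (by rw [hPb0]; exact hb0))
  have hPapos : ∀ᶠ x in 𝓝 (0:ℝ), 0 < Pa x :=
    (hPa 0).continuousAt.eventually (p := fun y => 0 < y)
      (eventually_gt_nhds (by rw [hPa0]; exact ha0))
  set g : ℝ → ℝ := fun x => Pa x / Pb x with hgdef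
  set g1 : ℝ → ℝ := fun x => ((Da x) * Pb x - Pa x * (Db x)) / (Pb x) ^ 2 with hg1def
  have hg : ∀ᶠ x in 𝓝 (0:ℝ), HasDerivAt g (g1 x) x :=
    hPbpos.mono fun x hx => (hPa x).div (hPb x) (ne_of_gt hx)
  have hgpos : ∀ᶠ x in 𝓝 (0:ℝ), 0 < g x :=
    (hPapos.and hPbpos).mono fun x hx => div_pos hx.1 hx.2
  have hg0 : HasDerivAt g (g1 0) 0 := hg.self_of_nhds
  have hgval : g 0 = a0 / b0 := by rw [hgdef]; simp [hPa0, hPb0]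
  have hg1val : g1 0 = (a1 * b0 - a0 * b1) / b0 ^ 2 := by
    rw [hg1def]; simp only [hPa0, hPb0, hDa0, hDb0]
  have hG : 0 < a0 / b0 := div_pos ha0 hb0
  have hg0pos : 0 < g 0 := by rw [hgval]; exact hG
  have hgne : g 0 ≠ 0 := ne_of_gt hg0pos
  set φ : ℝ → ℝ := fun x => -(g1 x * ((1:ℝ)/2) * g x ^ ((1:ℝ)/2 - 1)) with hφdef
  have hF : ∀ᶠ x in 𝓝 (0:ℝ), HasDerivAt (fun y => -(g y ^ ((1:ℝ)/2))) (φ x) x := by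
    filter_upwards [hg, hgpos] with x h1 h2
    exact (h1.rpow_const (Or.inl (ne_of_gt h2))).neg
  have hds : deriv (fun y => -(g y ^ ((1:ℝ)/2))) =ᶠ[𝓝 (0:ℝ)] φ :=
    hF.mono fun x hx => hx.deriv
  -- derivative of g1 at 0
  have hnum := ((hDa 0).mul (hPb 0)).sub ((hPa 0).mul (hDb 0))
  have hden := (hPb 0).pow 2
  have hbne : (Pb 0) ^ 2 ≠ 0 := by rw [hPb0]; positivity
  have hg1d := hnum.div hden hbne
  -- derivative of φ at 0
  have hφd := ((hg1d.mul_const ((1:ℝ)/2)).mul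
    (hg0.rpow_const (p := (1:ℝ)/2 - 1) (Or.inl hgne))).neg
  have hval : deriv φ 0 = _ := hφd.deriv
  have hiter : iteratedDeriv 2 (fun y => -(g y ^ ((1:ℝ)/2))) 0 = deriv φ 0 := by
    rw [iteratedDeriv_succ, iteratedDeriv_one]
    exact Filter.EventuallyEq.deriv_eq hds
  rw [show (fun x : ℝ =>
      -((a0 + a1 * x + a2 * x ^ 2 + a3 * x ^ 3 + a4 * x ^ 4)
          / (b0 + b1 * x + b2 * x ^ 2 + b3 * x ^ 3 + b4 * x ^ 4)) ^ ((1:ℝ)/2))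
      = (fun y => -(g y ^ ((1:ℝ)/2))) from rfl]
  rw [hiter, hval]
  -- now pure computation
  simp only [Pi.add_apply, Pi.sub_apply, Pi.mul_apply, Pi.div_apply, Pi.pow_apply]
  rw [hPa0, hPb0, hDa0, hDb0, hg1val, hgval]
  have e2 : (a0 / b0) ^ ((1:ℝ)/2 - 1 - 1) = ((a0/b0) ^ ((3:ℝ)/2))⁻¹ := by
    rw [show (1:ℝ)/2 - 1 - 1 = -((3:ℝ)/2) by norm_num, Real.rpow_neg hG.le]
  have e1 : (a0 / b0) ^ ((1:ℝ)/2 - 1) = (a0/b0) * ((a0/b0) ^ ((3:ℝ)/2))⁻¹ := by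
    rw [show (1:ℝ)/2 - 1 = 1 + -((3:ℝ)/2) by norm_num, Real.rpow_add hG, Real.rpow_one,
      Real.rpow_neg hG.le]
  rw [e1, e2]
  have hK : 0 < (a0/b0) ^ ((3:ℝ)/2) := Real.rpow_pos_of_pos hG _
  have hKne : ((a0/b0) ^ ((3:ℝ)/2)) ≠ 0 := ne_of_gt hK
  field_simp
  ring


lemma laplacianAt_pos (f : ℂ → ℝ)
    (a0 xa1 xa2 xa3 xa4 b0 xb1 xb2 xb3 xb4 ya1 ya2 ya3 ya4 yb1 yb2 yb3 yb4 : ℝ)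
    (ha0 : 0 < a0) (hb0 : 0 < b0)
    (hfx : (fun x : ℝ => f (x : ℂ)) = fun x : ℝ =>
      -((a0 + xa1 * x + xa2 * x ^ 2 + xa3 * x ^ 3 + xa4 * x ^ 4)
          / (b0 + xb1 * x + xb2 * x ^ 2 + xb3 * x ^ 3 + xb4 * x ^ 4)) ^ ((1:ℝ)/2))
    (hfy : (fun y : ℝ => f ((y : ℂ) * Complex.I)) = fun y : ℝ =>
      -((a0 + ya1 * y + ya2 * y ^ 2 + ya3 * y ^ 3 + ya4 * y ^ 4)
          / (b0 + yb1 * y + yb2 * y ^ 2 + yb3 * y ^ 3 + yb4 * y ^ 4)) ^ ((1:ℝ)/2))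
    (key : 0 < (xa1 / a0 - xb1 / b0) ^ 2 + (ya1 / a0 - yb1 / b0) ^ 2
        - (2 * xa2 / a0 - 2 * xb2 / b0 - 2 * (xb1 / b0) * (xa1 / a0 - xb1 / b0)
          + (2 * ya2 / a0 - 2 * yb2 / b0 - 2 * (yb1 / b0) * (ya1 / a0 - yb1 / b0))) * 2) :
    0 < laplacianAt f := by
  rw [laplacianAt, hfx, hfy, axis_second_deriv _ _ _ _ _ _ _ _ _ _ ha0 hb0,
    axis_second_deriv _ _ _ _ _ _ _ _ _ _ ha0 hb0, ← add_div]
  have hane : a0 ≠ 0 := ne_of_gt ha0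
  have hbne : b0 ≠ 0 := ne_of_gt hb0
  have hE : ((xa1 * b0 - a0 * xb1) / b0 ^ 2) ^ 2
        - 2 * (a0 / b0)
          * (((2 * xa2 * b0 - 2 * a0 * xb2) * b0 - 2 * (xa1 * b0 - a0 * xb1) * xb1) / b0 ^ 3)
      + (((ya1 * b0 - a0 * yb1) / b0 ^ 2) ^ 2
        - 2 * (a0 / b0)
          * (((2 * ya2 * b0 - 2 * a0 * yb2) * b0 - 2 * (ya1 * b0 - a0 * yb1) * yb1) / b0 ^ 3))
      = (a0 / b0) ^ 2 * ((xa1 / a0 - xb1 / b0) ^ 2 + (ya1 / a0 - yb1 / b0) ^ 2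
        - (2 * xa2 / a0 - 2 * xb2 / b0 - 2 * (xb1 / b0) * (xa1 / a0 - xb1 / b0)
          + (2 * ya2 / a0 - 2 * yb2 / b0 - 2 * (yb1 / b0) * (ya1 / a0 - yb1 / b0))) * 2) := by
    field_simp
    ring
  rw [hE]
  apply div_pos
  · apply mul_pos (by positivity) key
  · have : 0 < (a0 / b0) ^ ((3:ℝ)/2) := Real.rpow_pos_of_pos (div_pos ha0 hb0) _
    linarith


lemma one_sub_sum_abs_add (z ζ : Fin n → ℂ) (t : ℂ) :
    1 - ∑ j, ‖(z + t • ζ) j‖ ^ 2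
      = (1 - ∑ j, Complex.normSq (z j))
        - 2 * ((starRingEnd ℂ) t * ∑ j, z j * (starRingEnd ℂ) (ζ j)).re
        - Complex.normSq t * ∑ j, Complex.normSq (ζ j) := by
  have h : ∑ j, ‖(z + t • ζ) j‖ ^ 2 = ∑ j, Complex.normSq (z j + t * ζ j) := by
    simp [Complex.sq_norm]
  rw [h, sum_normSq_add z ζ t]
  ring

lemma one_sub_sum_mul_add (z w ζ ω : Fin n → ℂ) (t : ℂ) :
    1 - ∑ j, ((z + t • ζ) j) * ((w + t • ω) j)
      = (1 - ∑ j, z j * w j) + (-(∑ j, ζ j * w j + ∑ j, z j * ω j)) * t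
        + (-(∑ j, ζ j * ω j)) * t ^ 2 := by
  have h : ∑ j, ((z + t • ζ) j) * ((w + t • ω) j)
      = ∑ j, (z j + t * ζ j) * (w j + t * ω j) := by simp
  rw [h, sum_mul_add z w ζ ω t]
  ring

lemma normSq_poly_re (p q r : ℂ) (x : ℝ) :
    Complex.normSq (p + q * (x:ℂ) + r * (x:ℂ) ^ 2)
      = (p.re ^ 2 + p.im ^ 2) + 2 * (p.re * q.re + p.im * q.im) * x
        + (q.re ^ 2 + q.im ^ 2 + 2 * (p.re * r.re + p.im * r.im)) * x ^ 2
        + 2 * (q.re * r.re + q.im * r.im) * x ^ 3 + (r.re ^ 2 + r.im ^ 2) * x ^ 4 := by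
  simp only [← Complex.ofReal_pow, Complex.normSq_apply, Complex.add_re, Complex.add_im,
    Complex.mul_re, Complex.mul_im, Complex.ofReal_re, Complex.ofReal_im]
  ring

lemma normSq_poly_im (p q r : ℂ) (y : ℝ) :
    Complex.normSq (p + q * ((y:ℂ) * Complex.I) + r * ((y:ℂ) * Complex.I) ^ 2)
      = (p.re ^ 2 + p.im ^ 2) + 2 * (-(p.re * q.im) + p.im * q.re) * y
        + (q.re ^ 2 + q.im ^ 2 - 2 * (p.re * r.re + p.im * r.im)) * y ^ 2
        + 2 * (q.im * r.re - q.re * r.im) * y ^ 3 + (r.re ^ 2 + r.im ^ 2) * y ^ 4 := by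
  rw [show ((y:ℂ) * Complex.I) ^ 2 = ((-(y ^ 2) : ℝ) : ℂ) by
    rw [mul_pow, Complex.I_sq]; push_cast; ring]
  simp only [Complex.normSq_apply, Complex.add_re, Complex.add_im, Complex.mul_re,
    Complex.mul_im, Complex.ofReal_re, Complex.ofReal_im, Complex.I_re, Complex.I_im]
  ring

lemma conj_mul_re_ofReal (B : ℂ) (x : ℝ) :
    ((starRingEnd ℂ) (x:ℂ) * B).re = B.re * x := by
  simp [Complex.mul_re]; ring

lemma conj_mul_re_I (B : ℂ) (y : ℝ) :
    ((starRingEnd ℂ) ((y:ℂ) * Complex.I) * B).re = B.im * y := by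
  simp [Complex.mul_re, Complex.mul_im]; ring

lemma normSq_ofReal' (x : ℝ) : Complex.normSq (x:ℂ) = x ^ 2 := by
  rw [Complex.normSq_ofReal]; ring

lemma normSq_ofReal_I (y : ℝ) : Complex.normSq ((y:ℂ) * Complex.I) = y ^ 2 := by
  simp [Complex.normSq_mul, Complex.normSq_ofReal]; ring



end DeltaBarAux

open DeltaBarAux
set_option maxHeartbeats 2000000 in

/-- For `z, w ∈ 𝔹^n` one has `1 − Σ_j z_j w_j ≠ 0`, and `−δ̄^{1/2}` is strictly
plurisubharmonic on `𝔹^n × 𝔹^n` with values in `[−1, 0)`. -/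
theorem neg_deltaBar_sqrt_strictpsh_ball (n : ℕ) (hn : 1 ≤ n) :
    (∀ z ∈ unitBall n, ∀ w ∈ unitBall n, (1 : ℂ) - ∑ j, z j * w j ≠ 0) ∧
    StrictPSHOn (fun zw : (Fin n → ℂ) × (Fin n → ℂ) =>
        -(deltaBarBall n zw.1 zw.2 ^ ((1 : ℝ) / 2)))
      ((unitBall n) ×ˢ (unitBall n)) ∧
    (∀ z ∈ unitBall n, ∀ w ∈ unitBall n,
      -(deltaBarBall n z w ^ ((1 : ℝ) / 2)) ∈ Set.Ico (-1 : ℝ) 0) := by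
  have hmem : ∀ z : Fin n → ℂ, z ∈ unitBall n → ∑ j, Complex.normSq (z j) < 1 := by
    intro z hz
    have h : ∑ j, ‖z j‖ ^ 2 < 1 := hz
    calc ∑ j, Complex.normSq (z j) = ∑ j, ‖z j‖ ^ 2 := by simp [Complex.sq_norm]
      _ < 1 := h
  refine ⟨fun z hz w hw => one_sub_sum_ne_zero (hmem z hz) (hmem w hw), ?_, ?_⟩
  · -- strict plurisubharmonicity
    intro a ha v hv
    obtain ⟨haz, haw⟩ := ha
    set z := a.1 with hzdef
    set w := a.2 with hwdef
    set ζ := v.1 with hζdef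
    set ω := v.2 with hωdef
    have hz' : ∑ j, Complex.normSq (z j) < 1 := hmem _ haz
    have hw' : ∑ j, Complex.normSq (w j) < 1 := hmem _ haw
    have hA : (0:ℝ) < 1 - ∑ j, Complex.normSq (z j) := by linarith
    have hA' : (0:ℝ) < 1 - ∑ j, Complex.normSq (w j) := by linarith
    have hp : (1:ℂ) - ∑ j, z j * w j ≠ 0 := one_sub_sum_ne_zero hz' hw'
    set A : ℝ := 1 - ∑ j, Complex.normSq (z j) with hAdef
    set A' : ℝ := 1 - ∑ j, Complex.normSq (w j) with hA'def
    set C : ℝ := ∑ j, Complex.normSq (ζ j) with hCdef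
    set C' : ℝ := ∑ j, Complex.normSq (ω j) with hC'def
    set B : ℂ := ∑ j, z j * (starRingEnd ℂ) (ζ j) with hBdef
    set B' : ℂ := ∑ j, w j * (starRingEnd ℂ) (ω j) with hB'def
    set p : ℂ := 1 - ∑ j, z j * w j with hpdef
    set q : ℂ := -(∑ j, ζ j * w j + ∑ j, z j * ω j) with hqdef
    set r : ℂ := -(∑ j, ζ j * ω j) with hrdef
    set b0 : ℝ := p.re ^ 2 + p.im ^ 2 with hb0def
    have hb0 : 0 < b0 := by
      have h1 := Complex.normSq_pos.mpr hp
      rw [Complex.normSq_apply] at h1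
      rw [hb0def]
      nlinarith [h1]
    apply laplacianAt_pos _
      (A * A')
      (-(2 * (A * B'.re + A' * B.re)))
      (-(A * C') - A' * C + 4 * B.re * B'.re)
      (2 * (B.re * C' + B'.re * C))
      (C * C')
      b0
      (2 * (p.re * q.re + p.im * q.im))
      (q.re ^ 2 + q.im ^ 2 + 2 * (p.re * r.re + p.im * r.im))
      (2 * (q.re * r.re + q.im * r.im))
      (r.re ^ 2 + r.im ^ 2)
      (-(2 * (A * B'.im + A' * B.im)))
      (-(A * C') - A' * C + 4 * B.im * B'.im)
      (2 * (B.im * C' + B'.im * C))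
      (C * C')
      (2 * (-(p.re * q.im) + p.im * q.re))
      (q.re ^ 2 + q.im ^ 2 - 2 * (p.re * r.re + p.im * r.im))
      (2 * (q.im * r.re - q.re * r.im))
      (r.re ^ 2 + r.im ^ 2)
      (mul_pos hA hA') hb0 ?_ ?_ ?_
    · -- hfx
      funext x
      show -(deltaBarBall n ((a + (x:ℂ) • v).1) ((a + (x:ℂ) • v).2) ^ ((1:ℝ)/2)) = _
      have h1 : (a + (x:ℂ) • v).1 = z + (x:ℂ) • ζ := rfl
      have h2 : (a + (x:ℂ) • v).2 = w + (x:ℂ) • ω := rfl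
      rw [h1, h2]
      have hbase : deltaBarBall n (z + (x:ℂ) • ζ) (w + (x:ℂ) • ω)
          = (A * A' + -(2 * (A * B'.re + A' * B.re)) * x
              + (-(A * C') - A' * C + 4 * B.re * B'.re) * x ^ 2
              + 2 * (B.re * C' + B'.re * C) * x ^ 3 + C * C' * x ^ 4)
            / (b0 + 2 * (p.re * q.re + p.im * q.im) * x
              + (q.re ^ 2 + q.im ^ 2 + 2 * (p.re * r.re + p.im * r.im)) * x ^ 2
              + 2 * (q.re * r.re + q.im * r.im) * x ^ 3 + (r.re ^ 2 + r.im ^ 2) * x ^ 4) := by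
        rw [deltaBarBall, one_sub_sum_abs_add z ζ ((x:ℂ)), one_sub_sum_abs_add w ω ((x:ℂ)),
          one_sub_sum_mul_add z w ζ ω ((x:ℂ))]
        rw [← hBdef, ← hB'def, ← hCdef, ← hC'def, ← hAdef, ← hA'def, ← hpdef, ← hqdef, ← hrdef]
        rw [conj_mul_re_ofReal, conj_mul_re_ofReal, normSq_ofReal']
        rw [Complex.sq_norm, normSq_poly_re, ← hb0def]
        congr 1
        ring
      rw [hbase]
    · -- hfy
      funext y
      show -(deltaBarBall n ((a + ((y:ℂ) * Complex.I) • v).1)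
        ((a + ((y:ℂ) * Complex.I) • v).2) ^ ((1:ℝ)/2)) = _
      have h1 : (a + ((y:ℂ) * Complex.I) • v).1 = z + ((y:ℂ) * Complex.I) • ζ := rfl
      have h2 : (a + ((y:ℂ) * Complex.I) • v).2 = w + ((y:ℂ) * Complex.I) • ω := rfl
      rw [h1, h2]
      have hbase : deltaBarBall n (z + ((y:ℂ) * Complex.I) • ζ) (w + ((y:ℂ) * Complex.I) • ω)
          = (A * A' + -(2 * (A * B'.im + A' * B.im)) * y
              + (-(A * C') - A' * C + 4 * B.im * B'.im) * y ^ 2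
              + 2 * (B.im * C' + B'.im * C) * y ^ 3 + C * C' * y ^ 4)
            / (b0 + 2 * (-(p.re * q.im) + p.im * q.re) * y
              + (q.re ^ 2 + q.im ^ 2 - 2 * (p.re * r.re + p.im * r.im)) * y ^ 2
              + 2 * (q.im * r.re - q.re * r.im) * y ^ 3 + (r.re ^ 2 + r.im ^ 2) * y ^ 4) := by
        rw [deltaBarBall, one_sub_sum_abs_add z ζ ((y:ℂ) * Complex.I),
          one_sub_sum_abs_add w ω ((y:ℂ) * Complex.I),
          one_sub_sum_mul_add z w ζ ω ((y:ℂ) * Complex.I)]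
        rw [← hBdef, ← hB'def, ← hCdef, ← hC'def, ← hAdef, ← hA'def, ← hpdef, ← hqdef, ← hrdef]
        rw [conj_mul_re_I, conj_mul_re_I, normSq_ofReal_I]
        rw [Complex.sq_norm, normSq_poly_im, ← hb0def]
        congr 1
        ring
      rw [hbase]
    · -- key inequality
      have hvz : ¬(ζ = 0 ∧ ω = 0) := by
        rintro ⟨h1, h2⟩
        apply hv
        have : v = (ζ, ω) := rfl
        rw [this, h1, h2]
        rfl
      have hstar := star_ineq z w ζ ω hz' hw' hvz
      -- identify the complex quantities with B, B'
      have hBo : (∑ j, ζ j * (starRingEnd ℂ) (z j)) = (starRingEnd ℂ) B := by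
        rw [hBdef, map_sum]
        exact Finset.sum_congr rfl fun j _ => by rw [map_mul, Complex.conj_conj]; ring
      have hB'o : (∑ j, ω j * (starRingEnd ℂ) (w j)) = (starRingEnd ℂ) B' := by
        rw [hB'def, map_sum]
        exact Finset.sum_congr rfl fun j _ => by rw [map_mul, Complex.conj_conj]; ring
      have hq' : (∑ j, ζ j * w j + ∑ j, z j * ω j) = -q := by rw [hqdef]; ring
      rw [hBo, hB'o, hq', ← hpdef] at hstar
      rw [Complex.normSq_conj] at hstar
      rw [show Complex.normSq ((starRingEnd ℂ) B') = Complex.normSq B' from Complex.normSq_conj _]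
        at hstar
      -- expand the normSq of the complex combination into real components
      rw [← hAdef, ← hA'def, ← hCdef, ← hC'def] at hstar
      set W : ℂ := (starRingEnd ℂ) B / ((A:ℝ):ℂ) + (starRingEnd ℂ) B' / ((A':ℝ):ℂ) - -q / p
        with hWdef
      have hh1 : ((starRingEnd ℂ) B / ((A:ℝ):ℂ)).re = B.re / A := by
        rw [Complex.div_ofReal_re, Complex.conj_re]
      have hh2 : ((starRingEnd ℂ) B' / ((A':ℝ):ℂ)).re = B'.re / A' := by
        rw [Complex.div_ofReal_re, Complex.conj_re]
      have hh1' : ((starRingEnd ℂ) B / ((A:ℝ):ℂ)).im = -B.im / A := by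
        rw [Complex.div_ofReal_im, Complex.conj_im]
      have hh2' : ((starRingEnd ℂ) B' / ((A':ℝ):ℂ)).im = -B'.im / A' := by
        rw [Complex.div_ofReal_im, Complex.conj_im]
      have hns : Complex.normSq p = b0 := by
        rw [Complex.normSq_apply, hb0def]; ring
      have hh3 : (-q / p).re = -((p.re * q.re + p.im * q.im) / b0) := by
        rw [Complex.div_re, hns, Complex.neg_re, Complex.neg_im]
        ring
      have hh3' : (-q / p).im = -((p.re * q.im - p.im * q.re) / b0) := by
        rw [Complex.div_im, hns, Complex.neg_re, Complex.neg_im]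
        ring
      have hWre : W.re = B.re / A + B'.re / A' + (p.re * q.re + p.im * q.im) / b0 := by
        rw [hWdef, Complex.sub_re, Complex.add_re, hh1, hh2, hh3]
        ring
      have hWim : W.im = -B.im / A + -B'.im / A' + (p.re * q.im - p.im * q.re) / b0 := by
        rw [hWdef, Complex.sub_im, Complex.add_im, hh1', hh2', hh3']
        ring
      have hnB : Complex.normSq B = B.re ^ 2 + B.im ^ 2 := by
        rw [Complex.normSq_apply]; ring
      have hnB' : Complex.normSq B' = B'.re ^ 2 + B'.im ^ 2 := by
        rw [Complex.normSq_apply]; ring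
      have hnW : Complex.normSq W = W.re ^ 2 + W.im ^ 2 := by
        rw [Complex.normSq_apply]; ring
      rw [hnB, hnB', hnW, hWre, hWim] at hstar
      set Qr : ℝ := (p.re * q.re + p.im * q.im) / b0 with hQrdef
      set Qi : ℝ := (p.re * q.im - p.im * q.re) / b0 with hQidef
      have hAne : A ≠ 0 := ne_of_gt hA
      have hA'ne : A' ≠ 0 := ne_of_gt hA'
      have hb0ne : b0 ≠ 0 := ne_of_gt hb0
      have hq2 : q.re ^ 2 + q.im ^ 2 = (Qr ^ 2 + Qi ^ 2) * b0 := by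
        rw [hQrdef, hQidef, hb0def]
        have hb0ne2 : p.re ^ 2 + p.im ^ 2 ≠ 0 := by rw [← hb0def]; exact hb0ne
        field_simp
        ring
      have e1 : -(2 * (A * B'.re + A' * B.re)) / (A * A') = -2 * (B.re / A + B'.re / A') := by
        field_simp
        ring
      have e2 : 2 * (p.re * q.re + p.im * q.im) / b0 = 2 * Qr := by
        rw [hQrdef]; ring
      have e3 : -(2 * (A * B'.im + A' * B.im)) / (A * A') = -2 * (B.im / A + B'.im / A') := by
        field_simp
        ring
      have e4 : 2 * (-(p.re * q.im) + p.im * q.re) / b0 = -2 * Qi := by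
        rw [hQidef]; ring
      have e5 : 2 * (-(A * C') - A' * C + 4 * B.re * B'.re) / (A * A')
          = -2 * (C / A) - 2 * (C' / A') + 8 * (B.re / A) * (B'.re / A') := by
        field_simp
        ring
      have e6 : 2 * (q.re ^ 2 + q.im ^ 2 + 2 * (p.re * r.re + p.im * r.im)) / b0
          = 2 * (Qr ^ 2 + Qi ^ 2) + 4 * ((p.re * r.re + p.im * r.im) / b0) := by
        rw [hq2]
        field_simp
        ring
      have e7 : 2 * (-(A * C') - A' * C + 4 * B.im * B'.im) / (A * A')
          = -2 * (C / A) - 2 * (C' / A') + 8 * (B.im / A) * (B'.im / A') := by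
        field_simp
        ring
      have e8 : 2 * (q.re ^ 2 + q.im ^ 2 - 2 * (p.re * r.re + p.im * r.im)) / b0
          = 2 * (Qr ^ 2 + Qi ^ 2) - 4 * ((p.re * r.re + p.im * r.im) / b0) := by
        rw [hq2]
        field_simp
        ring
      rw [e1, e2, e3, e4, e5, e6, e7, e8]
      have hcv1 : 2 * (B.re ^ 2 + B.im ^ 2) / A ^ 2
          = 2 * ((B.re / A) ^ 2 + (B.im / A) ^ 2) := by
        field_simp
      have hcv2 : 2 * (B'.re ^ 2 + B'.im ^ 2) / A' ^ 2
          = 2 * ((B'.re / A') ^ 2 + (B'.im / A') ^ 2) := by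
        field_simp
      rw [hcv1, hcv2] at hstar
      have h4 : 0 < 4 * (2 * C / A + 2 * C' / A' + 2 * ((B.re / A) ^ 2 + (B.im / A) ^ 2)
          + 2 * ((B'.re / A') ^ 2 + (B'.im / A') ^ 2)
          - ((B.re / A + B'.re / A' + Qr) ^ 2 + (-B.im / A + -B'.im / A' + Qi) ^ 2)) := by
        linarith [hstar]
      convert h4 using 1
      ring
  · -- values in [-1, 0)
    intro z hz w hw
    have hz' : ∑ j, Complex.normSq (z j) < 1 := hmem z hz
    have hw' : ∑ j, Complex.normSq (w j) < 1 := hmem w hw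
    have hA : (0:ℝ) < 1 - ∑ j, Complex.normSq (z j) := by linarith
    have hA' : (0:ℝ) < 1 - ∑ j, Complex.normSq (w j) := by linarith
    have hp : (1:ℂ) - ∑ j, z j * w j ≠ 0 := one_sub_sum_ne_zero hz' hw'
    have habs_z : ∑ j, ‖z j‖ ^ 2 = ∑ j, Complex.normSq (z j) := by
      simp [Complex.sq_norm]
    have habs_w : ∑ j, ‖w j‖ ^ 2 = ∑ j, Complex.normSq (w j) := by
      simp [Complex.sq_norm]
    have hd : deltaBarBall n z w
        = ((1 - ∑ j, Complex.normSq (z j)) * (1 - ∑ j, Complex.normSq (w j)))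
          / Complex.normSq (1 - ∑ j, z j * w j) := by
      rw [deltaBarBall, habs_z, habs_w, Complex.sq_norm]
    have hpos : 0 < deltaBarBall n z w := by
      rw [hd]
      exact div_pos (mul_pos hA hA') (Complex.normSq_pos.mpr hp)
    have hle : deltaBarBall n z w ≤ 1 := by
      rw [hd]
      rw [div_le_one (Complex.normSq_pos.mpr hp)]
      -- (1-s)(1-t) ≤ |1-T|²
      set s : ℝ := ∑ j, Complex.normSq (z j) with hsdef
      set t : ℝ := ∑ j, Complex.normSq (w j) with htdef
      set u : ℝ := ‖∑ j, z j * w j‖ with hudef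
      have hs0 : 0 ≤ s := sum_normSq_nonneg z
      have ht0 : 0 ≤ t := sum_normSq_nonneg w
      have hu0 : 0 ≤ u := norm_nonneg _
      have hu2 : u ^ 2 ≤ s * t := by
        rw [hudef, Complex.sq_norm]
        exact cs_bilinear z w
      set x : ℝ := Real.sqrt s with hxdef
      set y : ℝ := Real.sqrt t with hydef
      have hx0 : 0 ≤ x := Real.sqrt_nonneg s
      have hy0 : 0 ≤ y := Real.sqrt_nonneg t
      have hx2 : x ^ 2 = s := Real.sq_sqrt hs0
      have hy2 : y ^ 2 = t := Real.sq_sqrt ht0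
      have hx1 : x ≤ 1 := by nlinarith [hz', hx2, hx0]
      have hy1 : y ≤ 1 := by nlinarith [hw', hy2, hy0]
      have hxy : u ≤ x * y := by
        have h1 : u ≤ Real.sqrt (s * t) := by
          rw [← Real.sqrt_sq hu0]
          exact Real.sqrt_le_sqrt hu2
        rw [Real.sqrt_mul hs0, ← hxdef, ← hydef] at h1
        exact h1
      have hnorm : 1 - u ≤ ‖1 - ∑ j, z j * w j‖ := by
        have h1 := norm_sub_norm_le (1:ℂ) (∑ j, z j * w j)
        simpa [hudef] using h1
      have habs0 : 0 ≤ ‖1 - ∑ j, z j * w j‖ := norm_nonneg _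
      have hsq : Complex.normSq (1 - ∑ j, z j * w j)
          = ‖1 - ∑ j, z j * w j‖ ^ 2 := (Complex.sq_norm _).symm
      rw [hsq]
      have h1u : 0 ≤ 1 - u := by nlinarith
      nlinarith [sq_nonneg (x - y), sq_nonneg (x * y - u), hnorm, h1u, habs0]
    have hpow_pos : 0 < deltaBarBall n z w ^ ((1:ℝ)/2) :=
      Real.rpow_pos_of_pos hpos _
    have hpow_le : deltaBarBall n z w ^ ((1:ℝ)/2) ≤ 1 :=
      Real.rpow_le_one hpos.le hle (by norm_num)
    exact ⟨by linarith, by linarith⟩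
end
end
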